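/- arXiv:0709.0389 — 4 statements merged into one kernel-verified Lean document; each statement's English description precedes it below -/
import Mathlib

section
/- For all integers K ≥ 1, 1 ≤ k ≤ K and N ≥ 1, P( ξ(k,ρ_N^+) ≥ 5N ) ≤ exp( −N/(4K) ). -/
open MeasureTheory ProbabilityTheory Filter
open scoped Classical ENNReal

variable {Ω : Type*} [MeasurableSpace Ω]

/-- The walk `S n = X 1 + ⋯ + X n` built from the steps `X 1, X 2, …`. -/
def walk (X : ℕ → Ω → ℤ) (n : ℕ) (ω : Ω) : ℤ := ∑ i ∈ Finset.range n, X (i + 1) ω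

/-- `X 1, X 2, …` are i.i.d. steps of a simple symmetric random walk:
independent, with `P(X i = 1) = P(X i = -1) = 1/2`. -/
def IsSSRW (P : Measure Ω) (X : ℕ → Ω → ℤ) : Prop :=
  (∀ i, Measurable (X i)) ∧
  iIndepFun X P ∧
  (∀ i, P {ω | X i ω = 1} = 1 / 2 ∧ P {ω | X i ω = -1} = 1 / 2)

/-- Local time `ξ(k,n) = #{i : 1 ≤ i ≤ n, S i = k}` of the walk at site `k` up to time `n`. -/
noncomputable def localTime (X : ℕ → Ω → ℤ) (k : ℤ) (n : ℕ) (ω : Ω) : ℕ :=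
  ((Finset.Icc 1 n).filter fun i => walk X i ω = k).card

/-- `ρ N`, the time of the `N`-th return of the walk to zero (the least time by which the walk
has visited `0` exactly `N` times). -/
noncomputable def rho (X : ℕ → Ω → ℤ) (N : ℕ) (ω : Ω) : ℕ :=
  sInf {n | localTime X 0 n ω = N}

/-- `ξ(k,n,↑)`: the number of upward excursions away from `k` completed up to time `n`,
counted through their endpoints. -/
noncomputable def upCount (X : ℕ → Ω → ℤ) (k : ℤ) (n : ℕ) (ω : Ω) : ℕ :=
  ((Finset.Icc 1 n).filter fun b => ∃ a < b, walk X a ω = k ∧ walk X b ω = k ∧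
      ∀ i, a < i → i < b → k < walk X i ω).card

/-- `ξ(k,n,↓)`: the number of downward excursions away from `k` completed up to time `n`,
counted through their endpoints. -/
noncomputable def downCount (X : ℕ → Ω → ℤ) (k : ℤ) (n : ℕ) (ω : Ω) : ℕ :=
  ((Finset.Icc 1 n).filter fun b => ∃ a < b, walk X a ω = k ∧ walk X b ω = k ∧
      ∀ i, a < i → i < b → walk X i ω < k).card

/-- `ρ⁺ N`, the endpoint of the `N`-th upward excursion of the walk away from `0`. -/
noncomputable def rhoPlus (X : ℕ → Ω → ℤ) (N : ℕ) (ω : Ω) : ℕ :=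
  sInf {n | upCount X 0 n ω = N}

/-- `τ_i^{(k)}`: `τ_0^{(k)} = 0` and
`τ_i^{(k)} = min {j > τ_{i-1}^{(k)} : S (j-1) = k, S j = k - 1}`. -/
noncomputable def tauRW (X : ℕ → Ω → ℤ) (k : ℤ) : ℕ → Ω → ℕ
  | 0 => fun _ => 0
  | i + 1 => fun ω =>
      sInf {j | tauRW X k i ω < j ∧ walk X (j - 1) ω = k ∧ walk X j ω = k - 1}

/-- `T_i^{(k)} = ξ(k, τ_i^{(k)}) − ξ(k, τ_{i-1}^{(k)})`. -/
noncomputable def T (X : ℕ → Ω → ℤ) (k : ℤ) (i : ℕ) (ω : Ω) : ℕ :=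
  localTime X k (tauRW X k i ω) ω - localTime X k (tauRW X k (i - 1) ω) ω

/-- `U^{(k)}(j) = T_1^{(k)} + ⋯ + T_j^{(k)} − 2 j`. -/
noncomputable def U (X : ℕ → Ω → ℤ) (k : ℤ) (j : ℕ) (ω : Ω) : ℤ :=
  (∑ i ∈ Finset.Icc 1 j, (T X k i ω : ℤ)) - 2 * (j : ℤ)

/-- `κ n = max {i ≤ n : S i = 0}`, the last zero of the walk up to time `n`. -/
noncomputable def kappa (X : ℕ → Ω → ℤ) (n : ℕ) (ω : Ω) : ℕ :=
  sSup {i | i ≤ n ∧ walk X i ω = 0}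


set_option linter.unusedSectionVars false
set_option linter.unusedVariables false

namespace St7


variable {X : ℕ → Ω → ℤ}

/-- all steps are `±1` -/
def Steps (X : ℕ → Ω → ℤ) (ω : Ω) : Prop := ∀ i, X i ω = 1 ∨ X i ω = -1

lemma walk_zero (ω : Ω) : walk X 0 ω = 0 := by simp [walk]

lemma walk_succ (n : ℕ) (ω : Ω) : walk X (n + 1) ω = walk X n ω + X (n + 1) ω := by
  simp [walk, Finset.sum_range_succ]

lemma localTime_zero (k : ℤ) (ω : Ω) : localTime X k 0 ω = 0 := by
  simp [localTime]

lemma upCount_zero (ω : Ω) : upCount X 0 0 ω = 0 := by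
  simp [upCount]

lemma localTime_succ (k : ℤ) (n : ℕ) (ω : Ω) :
    localTime X k (n + 1) ω
      = localTime X k n ω + if walk X (n + 1) ω = k then 1 else 0 := by
  simp only [localTime, Finset.card_filter]
  exact Finset.sum_Icc_succ_top (Nat.one_le_iff_ne_zero.2 (Nat.succ_ne_zero n)) _

/-- discrete intermediate-value style positivity propagation -/
lemma walk_pos_of (hs : Steps X ω) (a m : ℕ)
    (hnz : ∀ j, a < j → j ≤ m → walk X j ω ≠ 0) (hm : 0 < walk X m ω) :
    ∀ i, a < i → i ≤ m → 0 < walk X i ω := by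
  have key : ∀ d j, a < j → j ≤ m → m - j = d → 0 < walk X j ω := by
    intro d
    induction d with
    | zero =>
      intro j hj1 hj2 hj3
      have : j = m := by omega
      subst this; exact hm
    | succ d ih =>
      intro j hj1 hj2 hj3
      have hjm : j < m := by omega
      have h1 : 0 < walk X (j + 1) ω := ih (j + 1) (by omega) (by omega) (by omega)
      have h2 := walk_succ (X := X) j ω
      have h3 := hs (j + 1)
      have h4 := hnz j hj1 (le_of_lt hjm)
      rcases h3 with h | h <;> omega
  intro i hi1 hi2
  exact key (m - i) i hi1 hi2 rfl

/-- On paths with `±1` steps, the number of completed upward excursions away from 0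
increments exactly when the walk steps from `1` to `0`. -/
lemma upCount_succ (hs : Steps X ω) (n : ℕ) :
    upCount X 0 (n + 1) ω = upCount X 0 n ω
      + if (walk X (n + 1) ω = 0 ∧ walk X n ω = 1) then 1 else 0 := by
  have hiff : (∃ a < n + 1, walk X a ω = 0 ∧ walk X (n + 1) ω = 0 ∧
      ∀ i, a < i → i < n + 1 → 0 < walk X i ω) ↔
      (walk X (n + 1) ω = 0 ∧ walk X n ω = 1) := by
    constructor
    · rintro ⟨a, ha, ha0, hb0, hpos⟩
      refine ⟨hb0, ?_⟩
      have han : a ≠ n := by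
        rintro rfl
        have h2 := walk_succ (X := X) a ω
        have h3 := hs (a + 1)
        omega
      have haln : a < n := by omega
      have hn : 0 < walk X n ω := hpos n haln (by omega)
      have h2 := walk_succ (X := X) n ω
      have h3 := hs (n + 1)
      omega
    · rintro ⟨hb0, hn1⟩
      classical
      set a := Nat.findGreatest (fun a => walk X a ω = 0) n with ha_def
      have ha0 : walk X a ω = 0 :=
        Nat.findGreatest_spec (P := fun a => walk X a ω = 0) (Nat.zero_le n)
          (walk_zero (X := X) ω)
      have haln : a ≤ n := Nat.findGreatest_le (P := fun a => walk X a ω = 0) n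
      have han : a ≠ n := by
        intro h; rw [h] at ha0; omega
      have hnz : ∀ j, a < j → j ≤ n → walk X j ω ≠ 0 := by
        intro j hj1 hj2
        exact Nat.findGreatest_is_greatest (P := fun a => walk X a ω = 0) hj1 hj2
      have hpos := walk_pos_of hs a n hnz (by omega)
      exact ⟨a, by omega, ha0, hb0, fun i hi1 hi2 => hpos i hi1 (by omega)⟩
  simp only [upCount, Finset.card_filter]
  rw [Finset.sum_Icc_succ_top (Nat.one_le_iff_ne_zero.2 (Nat.succ_ne_zero n))]
  congr 1
  simp only [hiff]



/-! ### The exponential weight function and its one-step inequality -/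

noncomputable def lam (k : ℕ) : ℝ := 1 / (4 * k)
noncomputable def mu (k : ℕ) : ℝ := 1 / k
noncomputable def bet (k : ℕ) : ℝ := 1 - Real.exp (-(lam k))
noncomputable def ga (k : ℕ) : ℝ := Real.exp (-(mu k))
noncomputable def gb (k : ℕ) : ℝ := 2 * bet k * ga k / (1 - 2 * bet k * k)
noncomputable def gA (k : ℕ) : ℝ := Real.exp (-(lam k)) * (ga k + gb k * k)

noncomputable def g (k : ℕ) : ℤ → ℝ := fun x =>
  if x ≤ 0 then 1
  else if x < (k : ℤ) then ga k + gb k * (x : ℝ)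
  else if x = (k : ℤ) then gA k
  else Real.exp (lam k) * gA k

section facts
variable {k : ℕ} (hk : 1 ≤ k)

lemma kR_pos (hk : 1 ≤ k) : (1 : ℝ) ≤ (k : ℝ) := by exact_mod_cast hk

lemma lam_pos (hk : 1 ≤ k) : 0 < lam k := by
  have := kR_pos hk; unfold lam; positivity

lemma lam_mul_k (hk : 1 ≤ k) : lam k * k = 1 / 4 := by
  have h0 : (k : ℝ) ≠ 0 := by have := kR_pos hk; linarith
  unfold lam; field_simp

lemma mu_eq (hk : 1 ≤ k) : mu k * k = 1 := by
  have h0 : (k : ℝ) ≠ 0 := by have := kR_pos hk; linarith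
  unfold mu; field_simp

lemma bet_nonneg (hk : 1 ≤ k) : 0 ≤ bet k := by
  have h1 : Real.exp (-(lam k)) ≤ Real.exp 0 :=
    Real.exp_le_exp.2 (by linarith [lam_pos hk])
  rw [Real.exp_zero] at h1
  unfold bet; linarith

lemma bet_le_lam (hk : 1 ≤ k) : bet k ≤ lam k := by
  have := Real.add_one_le_exp (-(lam k))
  unfold bet; linarith

lemma den_ge (hk : 1 ≤ k) : (1 : ℝ) / 2 ≤ 1 - 2 * bet k * k := by
  have h1 : bet k * k ≤ lam k * k :=
    mul_le_mul_of_nonneg_right (bet_le_lam hk) (by positivity)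
  rw [lam_mul_k hk] at h1
  linarith

lemma ga_pos (hk : 1 ≤ k) : 0 < ga k := Real.exp_pos _

lemma gb_nonneg (hk : 1 ≤ k) : 0 ≤ gb k := by
  have h1 := den_ge hk
  have h2 := bet_nonneg hk
  have h3 := (ga_pos hk).le
  unfold gb; positivity

lemma gb_den (hk : 1 ≤ k) : gb k * (1 - 2 * bet k * k) = 2 * bet k * ga k := by
  have h1 := den_ge hk
  have hne : (1 - 2 * bet k * k) ≠ 0 := by linarith
  unfold gb; field_simp

lemma gb_le (hk : 1 ≤ k) : gb k * k ≤ ga k := by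
  have h1 := den_ge hk
  have h2 := gb_nonneg hk
  have h3 := gb_den hk
  have h4 : bet k * k ≤ 1 / 4 := by
    have := mul_le_mul_of_nonneg_right (bet_le_lam hk) (show (0:ℝ) ≤ k by positivity)
    rw [lam_mul_k hk] at this; linarith
  -- gb * (1 - 2βk) = 2βa, so gb ≤ 4βa, so gb*k ≤ 4βk a ≤ a
  have h5 : gb k ≤ 4 * bet k * ga k := by nlinarith
  have h6 : 0 ≤ bet k := bet_nonneg hk
  have h7 : 0 ≤ ga k := (ga_pos hk).le
  have h8 : (0:ℝ) ≤ k := by positivity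
  nlinarith

lemma ga_add_gb_le_one (hk : 1 ≤ k) : ga k + gb k ≤ 1 := by
  have h1 : mu k + 1 ≤ Real.exp (mu k) := Real.add_one_le_exp (mu k)
  have h2 : Real.exp (mu k) * ga k = 1 := by
    rw [ga, ← Real.exp_add]; simp
  have h3 := ga_pos hk
  have hkR := kR_pos hk
  have h4 : gb k ≤ ga k / k :=
    (le_div_iff₀ (by linarith : (0:ℝ) < (k:ℝ))).2 (gb_le hk)
  have h5 : gb k ≤ ga k * mu k := by
    have : ga k / k = ga k * (1 / k) := by ring
    rw [this] at h4; unfold mu; exact h4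
  -- ga (1 + mu) ≤ ga * exp mu = 1
  have h6 : ga k * (1 + mu k) ≤ ga k * Real.exp (mu k) :=
    mul_le_mul_of_nonneg_left (by linarith) h3.le
  nlinarith

lemma exp_lam_gA (hk : 1 ≤ k) : Real.exp (lam k) * gA k = ga k + gb k * k := by
  rw [gA, ← mul_assoc, ← Real.exp_add]; simp

lemma gA_nonneg (hk : 1 ≤ k) : 0 ≤ gA k := by
  have := ga_pos hk; have := gb_nonneg hk
  have : (0:ℝ) ≤ ga k + gb k * k := by positivity
  unfold gA; positivity

lemma key_ineq (hk : 1 ≤ k) :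
    ga k + gb k * k + (ga k + gb k * ((k : ℝ) - 1)) ≤ 2 * gA k := by
  -- 2 gA = 2(1-β)(a + bk);  need 2β(a+bk) ≤ b, which is equality from gb_den
  have h1 := gb_den hk
  have h2 : gA k = (1 - bet k) * (ga k + gb k * k) := by
    unfold gA bet; ring_nf
  rw [h2]
  have h3 := bet_nonneg hk
  have h4 := (ga_pos hk).le
  have h5 := gb_nonneg hk
  have h6 : (0:ℝ) ≤ k := by positivity
  nlinarith

lemma g_nonneg (hk : 1 ≤ k) : ∀ x : ℤ, 0 ≤ g k x := by
  intro x
  unfold g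
  split_ifs with h1 h2 h3
  · norm_num
  · have hx : (1 : ℝ) ≤ (x : ℝ) := by exact_mod_cast (by omega : (1:ℤ) ≤ x)
    have := (ga_pos hk).le; have := gb_nonneg hk
    nlinarith
  · exact gA_nonneg hk
  · have := gA_nonneg hk; positivity

lemma g_zero : g k 0 = 1 := by simp [g]

end facts

/-- The master one-step inequality for the weight `g`. -/
lemma master (k : ℕ) (hk : 1 ≤ k) (x : ℤ) :
    (if x + 1 = (k : ℤ) then Real.exp (lam k) else 1) * g k (x + 1)
      + ((if x - 1 = (k : ℤ) then Real.exp (lam k) else 1)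
          * (if x = 1 then Real.exp (-(mu k)) else 1)) * g k (x - 1)
      ≤ 2 * g k x := by
  have hkZ : (1 : ℤ) ≤ (k : ℤ) := by exact_mod_cast hk
  have hEgA := exp_lam_gA hk
  have hga := ga_pos hk
  have hgb := gb_nonneg hk
  -- helper: upward combined value for 0 ≤ x, x+1 ≤ k
  have hup : ∀ y : ℤ, 0 ≤ y → y + 1 ≤ (k : ℤ) →
      (if y + 1 = (k : ℤ) then Real.exp (lam k) else 1) * g k (y + 1)
        = ga k + gb k * ((y : ℝ) + 1) := by
    intro y hy0 hy1
    by_cases h : y + 1 = (k : ℤ)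
    · rw [if_pos h]
      have : g k (y + 1) = gA k := by
        unfold g
        rw [if_neg (by omega), if_neg (by omega), if_pos h]
      rw [this, hEgA]
      have hy : ((y:ℝ) + 1) = (k:ℝ) := by exact_mod_cast h
      rw [hy]
    · rw [if_neg h]
      have : g k (y + 1) = ga k + gb k * ((y : ℝ) + 1) := by
        unfold g
        rw [if_neg (by omega), if_pos (by omega)]
        push_cast; ring
      rw [this, one_mul]
  -- helper: downward combined value for 1 ≤ x ≤ k
  have hdn : ∀ y : ℤ, 1 ≤ y → y ≤ (k : ℤ) →
      ((if y - 1 = (k : ℤ) then Real.exp (lam k) else 1)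
          * (if y = 1 then Real.exp (-(mu k)) else 1)) * g k (y - 1)
        = ga k + gb k * ((y : ℝ) - 1) := by
    intro y hy0 hy1
    rw [if_neg (by omega)]
    by_cases h : y = (1 : ℤ)
    · rw [if_pos h]
      have : g k (y - 1) = 1 := by unfold g; rw [if_pos (by omega)]
      rw [this, h]; push_cast
      rw [← ga]; ring
    · rw [if_neg h]
      have : g k (y - 1) = ga k + gb k * ((y : ℝ) - 1) := by
        unfold g
        rw [if_neg (by omega), if_pos (by omega)]
        push_cast; ring
      rw [this]; ring
  rcases lt_trichotomy x 0 with hx | hx | hx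
  · -- x ≤ -1
    have e1 : g k (x + 1) = 1 := by unfold g; rw [if_pos (by omega)]
    have e2 : g k (x - 1) = 1 := by unfold g; rw [if_pos (by omega)]
    have e3 : g k x = 1 := by unfold g; rw [if_pos (by omega)]
    rw [e1, e2, e3, if_neg (by omega), if_neg (by omega), if_neg (by omega)]
    norm_num
  · -- x = 0
    subst hx
    have e2 : g k (0 - 1) = 1 := by unfold g; rw [if_pos (by omega)]
    have e3 : g k 0 = 1 := by unfold g; rw [if_pos (by omega)]
    rw [hup 0 le_rfl (by omega), e2, e3, if_neg (by omega), if_neg (by omega)]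
    have := ga_add_gb_le_one hk
    push_cast
    norm_num
    linarith
  · -- x ≥ 1
    rcases lt_trichotomy x (k : ℤ) with hxk | hxk | hxk
    · -- 1 ≤ x ≤ k - 1 : exact equality
      rw [hup x (by omega) (by omega), hdn x (by omega) (by omega)]
      have e3 : g k x = ga k + gb k * (x : ℝ) := by
        unfold g; rw [if_neg (by omega), if_pos hxk]
      rw [e3]; ring_nf
      linarith
    · -- x = k
      have e1 : g k (x + 1) = Real.exp (lam k) * gA k := by
        unfold g; rw [if_neg (by omega), if_neg (by omega), if_neg (by omega)]
      have e3 : g k x = gA k := by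
        unfold g; rw [if_neg (by omega), if_neg (by omega), if_pos hxk]
      rw [e1, e3, hdn x (by omega) (by omega), if_neg (by omega), hEgA]
      have hxR : (x : ℝ) = (k : ℝ) := by exact_mod_cast hxk
      rw [hxR]
      have := key_ineq hk
      linarith
    · -- x ≥ k + 1
      have e1 : g k (x + 1) = Real.exp (lam k) * gA k := by
        unfold g; rw [if_neg (by omega), if_neg (by omega), if_neg (by omega)]
      have e3 : g k x = Real.exp (lam k) * gA k := by
        unfold g; rw [if_neg (by omega), if_neg (by omega), if_neg (by omega)]
      rw [e1, e3, if_neg (show ¬ x + 1 = (k:ℤ) by omega),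
        if_neg (show ¬ x = 1 by omega)]
      by_cases h : x - 1 = (k : ℤ)
      · rw [if_pos h]
        have e2 : g k (x - 1) = gA k := by
          unfold g; rw [if_neg (by omega), if_neg (by omega), if_pos h]
        rw [e2]; linarith
      · rw [if_neg h]
        have e2 : g k (x - 1) = Real.exp (lam k) * gA k := by
          unfold g; rw [if_neg (by omega), if_neg (by omega), if_neg h]
        rw [e2]; linarith


variable {X : ℕ → Ω → ℤ} {P : Measure Ω}

/-- `F` depends only on the steps `X 1, …, X n`. -/
def DependsOn (X : ℕ → Ω → ℤ) (n : ℕ) {α : Type*} (F : Ω → α) : Prop :=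
  ∀ ω ω', (∀ i, 1 ≤ i → i ≤ n → X i ω = X i ω') → F ω = F ω'

/-- the prefix map recording the first `n` steps -/
def pre (X : ℕ → Ω → ℤ) (n : ℕ) : Ω → ((Finset.Icc 1 n : Finset ℕ) → ℤ) :=
  fun ω i => X i ω

lemma measurable_pre (hX : ∀ i, Measurable (X i)) (n : ℕ) : Measurable (pre X n) :=
  measurable_pi_lambda _ (fun i => hX i)

lemma factor {α : Type*} [Nonempty α] {n : ℕ} {F : Ω → α} (h : DependsOn X n F) :
    ∃ φ : ((Finset.Icc 1 n : Finset ℕ) → ℤ) → α, F = φ ∘ pre X n := by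
  classical
  refine ⟨fun v => if h' : ∃ ω, pre X n ω = v then F h'.choose else Classical.arbitrary α, ?_⟩
  funext ω
  have h' : ∃ ω', pre X n ω' = pre X n ω := ⟨ω, rfl⟩
  simp only [Function.comp_apply, dif_pos h']
  refine h _ _ ?_
  intro i hi1 hi2
  have := h'.choose_spec
  exact (congrFun this ⟨i, Finset.mem_Icc.2 ⟨hi1, hi2⟩⟩).symm

lemma measurable_of_dependsOn {α : Type*} [Nonempty α] [MeasurableSpace α] {n : ℕ}
    {F : Ω → α} (h : DependsOn X n F) (hX : ∀ i, Measurable (X i)) : Measurable F := by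
  obtain ⟨φ, hφ⟩ := factor h
  rw [hφ]
  exact (measurable_of_countable φ).comp (measurable_pre hX n)

/-- The key independence computation: integrating out the `(n+1)`-st step. -/
lemma lintegral_mul_indicator_step (hX : IsSSRW P X) (n : ℕ) {F : Ω → ℝ≥0∞}
    (hF : DependsOn X n F) (s : ℤ) :
    ∫⁻ ω, F ω * ({ω' | X (n + 1) ω' = s}).indicator (fun _ => (1 : ℝ≥0∞)) ω ∂P
      = P {ω' | X (n + 1) ω' = s} * ∫⁻ ω, F ω ∂P := by
  obtain ⟨φ, hφ⟩ := factor hF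
  have hdisj : Disjoint (Finset.Icc 1 n) ({n + 1} : Finset ℕ) := by
    simp only [Finset.disjoint_singleton_right, Finset.mem_Icc]
    omega
  have h1 : IndepFun (fun ω (i : (Finset.Icc 1 n : Finset ℕ)) => X i ω)
      (fun ω (i : ({n + 1} : Finset ℕ)) => X i ω) P :=
    hX.2.1.indepFun_finset _ _ hdisj hX.1
  have hmem : (n + 1) ∈ ({n + 1} : Finset ℕ) := Finset.mem_singleton_self _
  set ψ : ℤ → ℝ≥0∞ := fun z => ({s} : Set ℤ).indicator (fun _ => (1 : ℝ≥0∞)) z with hψ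
  have h2 : IndepFun F (fun ω => ψ (X (n + 1) ω)) P := by
    have := h1.comp (φ := φ)
      (ψ := fun v : (({n + 1} : Finset ℕ) → ℤ) => ψ (v ⟨n + 1, hmem⟩))
      (measurable_of_countable φ) (measurable_of_countable _)
    rw [hφ]
    exact this
  have hmF : Measurable F := measurable_of_dependsOn hF hX.1
  have hmG : Measurable (fun ω => ψ (X (n + 1) ω)) :=
    (measurable_of_countable ψ).comp (hX.1 _)
  have h3 := lintegral_mul_eq_lintegral_mul_lintegral_of_indepFun hmF hmG h2
  have hset : {ω' | X (n + 1) ω' = s} = (X (n + 1)) ⁻¹' {s} := rfl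
  have h4 : ∀ ω, ({ω' | X (n + 1) ω' = s}).indicator (fun _ => (1 : ℝ≥0∞)) ω
      = ψ (X (n + 1) ω) := by
    intro ω
    simp only [hψ, Set.indicator_apply, Set.mem_setOf_eq, Set.mem_singleton_iff]
  calc ∫⁻ ω, F ω * ({ω' | X (n + 1) ω' = s}).indicator (fun _ => (1 : ℝ≥0∞)) ω ∂P
      = ∫⁻ ω, (F * fun ω => ψ (X (n + 1) ω)) ω ∂P :=
        lintegral_congr fun ω => by rw [Pi.mul_apply, h4 ω]
    _ = (∫⁻ ω, F ω ∂P) * ∫⁻ ω, ψ (X (n + 1) ω) ∂P := h3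
    _ = P {ω' | X (n + 1) ω' = s} * ∫⁻ ω, F ω ∂P := by
        rw [mul_comm]
        congr 1
        have : ∀ ω, ψ (X (n + 1) ω)
            = ({ω' | X (n + 1) ω' = s}).indicator (fun _ => (1 : ℝ≥0∞)) ω :=
          fun ω => (h4 ω).symm
        simp only [this]
        have hms : MeasurableSet {ω' | X (n + 1) ω' = s} :=
          hX.1 (n + 1) (MeasurableSet.singleton s)
        rw [lintegral_indicator hms]
        simp

/-- the walk up to time `n` depends only on the first `n` steps -/
lemma dependsOn_walk (n j : ℕ) (hj : j ≤ n) : DependsOn X n (walk X j) := by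
  intro ω ω' h
  unfold walk
  refine Finset.sum_congr rfl ?_
  intro i hi
  rw [Finset.mem_range] at hi
  exact h (i + 1) (by omega) (by omega)

lemma dependsOn_localTime (k : ℤ) (n j : ℕ) (hj : j ≤ n) :
    DependsOn X n (localTime X k j) := by
  intro ω ω' h
  unfold localTime
  rw [Finset.card_filter, Finset.card_filter]
  refine Finset.sum_congr rfl ?_
  intro i hi
  rw [Finset.mem_Icc] at hi
  rw [dependsOn_walk n i (by omega) ω ω' h]

lemma dependsOn_upCount (k : ℤ) (n j : ℕ) (hj : j ≤ n) :
    DependsOn X n (upCount X k j) := by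
  intro ω ω' h
  unfold upCount
  rw [Finset.card_filter, Finset.card_filter]
  refine Finset.sum_congr rfl ?_
  intro b hb
  rw [Finset.mem_Icc] at hb
  have hw : ∀ i, i ≤ b → walk X i ω = walk X i ω' :=
    fun i hi => dependsOn_walk n i (by omega) ω ω' h
  congr 1
  apply propext
  constructor
  · rintro ⟨a, ha, h1, h2, h3⟩
    exact ⟨a, ha, by rw [← hw a (by omega)]; exact h1, by rw [← hw b le_rfl]; exact h2,
      fun i hi1 hi2 => by rw [← hw i (by omega)]; exact h3 i hi1 hi2⟩
  · rintro ⟨a, ha, h1, h2, h3⟩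
    exact ⟨a, ha, by rw [hw a (by omega)]; exact h1, by rw [hw b le_rfl]; exact h2,
      fun i hi1 hi2 => by rw [hw i (by omega)]; exact h3 i hi1 hi2⟩


/-! ### The exponentially weighted process and its stopped version -/

section process

variable (X : ℕ → Ω → ℤ) (k N : ℕ)

/-- the real value of the weighted process -/
noncomputable def Mval (n : ℕ) (ω : Ω) : ℝ :=
  Real.exp (lam k * (localTime X (k : ℤ) n ω : ℝ) - mu k * (upCount X 0 n ω : ℝ))
    * g k (walk X n ω)

noncomputable def M (n : ℕ) (ω : Ω) : ℝ≥0∞ := ENNReal.ofReal (Mval X k n ω)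

/-- the walk has completed `N` upward excursions by time `n` -/
def Hit (n : ℕ) (ω : Ω) : Prop := ∃ j ≤ n, upCount X 0 j ω = N

/-- the process stopped at the end of the `N`-th upward excursion -/
noncomputable def Y : ℕ → Ω → ℝ≥0∞
  | 0 => M X k 0
  | n + 1 => fun ω => if Hit X N n ω then Y n ω else M X k (n + 1) ω

/-- hypothetical value of `Mval` at time `n+1` if the `(n+1)`-st step is `s` -/
noncomputable def nextVal (s : ℤ) (n : ℕ) (ω : Ω) : ℝ :=
  Real.exp (lam k * ((localTime X (k : ℤ) n ω : ℝ)
        + (if walk X n ω + s = (k : ℤ) then (1 : ℝ) else 0))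
      - mu k * ((upCount X 0 n ω : ℝ)
        + (if walk X n ω = 1 ∧ s = -1 then (1 : ℝ) else 0)))
    * g k (walk X n ω + s)

end process

variable {k N : ℕ}

lemma Mval_nonneg (hk : 1 ≤ k) (n : ℕ) (ω : Ω) : 0 ≤ Mval X k n ω :=
  mul_nonneg (Real.exp_pos _).le (g_nonneg hk _)

lemma nextVal_nonneg (hk : 1 ≤ k) (s : ℤ) (n : ℕ) (ω : Ω) : 0 ≤ nextVal X k s n ω :=
  mul_nonneg (Real.exp_pos _).le (g_nonneg hk _)

lemma Mval_zero (n : ℕ) (ω : Ω) (h : n = 0) : Mval X k n ω = 1 := by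
  subst h
  unfold Mval
  rw [localTime_zero, upCount_zero, walk_zero, g_zero]
  norm_num

/-- on paths with `±1` steps, `Mval` at time `n+1` is `nextVal` of the step taken -/
lemma Mval_succ (hs : Steps X ω) (n : ℕ) :
    Mval X k (n + 1) ω = nextVal X k (X (n + 1) ω) n ω := by
  unfold Mval nextVal
  rw [localTime_succ, upCount_succ hs, walk_succ]
  have hprop : (walk X n ω + X (n + 1) ω = 0 ∧ walk X n ω = 1)
      = (walk X n ω = 1 ∧ X (n + 1) ω = -1) := by
    apply propext
    constructor
    · rintro ⟨h1, h2⟩; exact ⟨h2, by omega⟩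
    · rintro ⟨h1, h2⟩; exact ⟨by omega, h1⟩
  simp only [hprop]
  split_ifs <;> push_cast <;> ring_nf

/-- the key one-step inequality, pointwise -/
lemma step_sum_le (hk : 1 ≤ k) (n : ℕ) (ω : Ω) :
    nextVal X k 1 n ω + nextVal X k (-1) n ω ≤ 2 * Mval X k n ω := by
  set x := walk X n ω with hx
  set ξ := (localTime X (k : ℤ) n ω : ℝ) with hξ
  set u := (upCount X 0 n ω : ℝ) with hu
  set E := Real.exp (lam k * ξ - mu k * u) with hE
  have hEpos : 0 < E := Real.exp_pos _
  have hfalse : ¬ (x = 1 ∧ (1:ℤ) = -1) := by rintro ⟨-, h⟩; omega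
  have h1 : nextVal X k 1 n ω
      = E * (((if x + 1 = (k:ℤ) then Real.exp (lam k) else 1) * 1) * g k (x + 1)) := by
    unfold nextVal
    rw [← hx, ← hξ, ← hu, if_neg hfalse]
    by_cases hc : x + 1 = (k:ℤ)
    · rw [if_pos hc, if_pos hc,
        show lam k * (ξ + 1) - mu k * (u + 0) = (lam k * ξ - mu k * u) + lam k by ring,
        Real.exp_add]
      ring
    · rw [if_neg hc, if_neg hc,
        show lam k * (ξ + 0) - mu k * (u + 0) = lam k * ξ - mu k * u by ring]
      ring
  have htrue : ((-1:ℤ) = -1) := rfl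
  have h2 : nextVal X k (-1) n ω
      = E * (((if x - 1 = (k:ℤ) then Real.exp (lam k) else 1)
          * (if x = 1 then Real.exp (-(mu k)) else 1)) * g k (x - 1)) := by
    unfold nextVal
    rw [← hx, ← hξ, ← hu]
    have e3 : x + -1 = x - 1 := by ring
    rw [e3]
    have e2 : ∀ {α : Type} [inst : Decidable (x = 1 ∧ (-1:ℤ) = -1)] (p q : α),
        (if x = 1 ∧ (-1:ℤ) = -1 then p else q) = (if x = 1 then p else q) := by
      intro α inst p q
      by_cases hd : x = 1
      · rw [if_pos ⟨hd, htrue⟩, if_pos hd]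
      · rw [if_neg (fun c => hd c.1), if_neg hd]
    rw [e2]
    by_cases hc : x - 1 = (k:ℤ) <;> by_cases hd : x = 1
    · rw [if_pos hc, if_pos hc, if_pos hd, if_pos hd,
        show lam k * (ξ + 1) - mu k * (u + 1)
          = (lam k * ξ - mu k * u) + (lam k + -(mu k)) by ring,
        Real.exp_add, Real.exp_add]
      ring
    · rw [if_pos hc, if_pos hc, if_neg hd, if_neg hd,
        show lam k * (ξ + 1) - mu k * (u + 0) = (lam k * ξ - mu k * u) + lam k by ring,
        Real.exp_add]
      ring
    · rw [if_neg hc, if_neg hc, if_pos hd, if_pos hd,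
        show lam k * (ξ + 0) - mu k * (u + 1) = (lam k * ξ - mu k * u) + -(mu k) by ring,
        Real.exp_add]
      ring
    · rw [if_neg hc, if_neg hc, if_neg hd, if_neg hd,
        show lam k * (ξ + 0) - mu k * (u + 0) = lam k * ξ - mu k * u by ring]
      ring
  have hmaster := master k hk x
  have hM : Mval X k n ω = E * g k x := rfl
  rw [h1, h2, hM]
  have := mul_le_mul_of_nonneg_left hmaster hEpos.le
  nlinarith [this]

/-! ### DependsOn and measurability of the processes -/

lemma dependsOn_mono {α : Type*} {F : Ω → α} {n m : ℕ} (h : DependsOn X n F) (hnm : n ≤ m) :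
    DependsOn X m F :=
  fun ω ω' hh => h ω ω' (fun i hi1 hi2 => hh i hi1 (by omega))

lemma dependsOn_M (n : ℕ) : DependsOn X n (M X k n) := by
  intro ω ω' h
  unfold M Mval
  rw [dependsOn_walk n n le_rfl ω ω' h, dependsOn_localTime (k:ℤ) n n le_rfl ω ω' h,
    dependsOn_upCount 0 n n le_rfl ω ω' h]

lemma dependsOn_nextVal (s : ℤ) (n : ℕ) :
    DependsOn X n (fun ω => ENNReal.ofReal (nextVal X k s n ω)) := by
  intro ω ω' h
  unfold nextVal
  dsimp only
  rw [dependsOn_walk n n le_rfl ω ω' h, dependsOn_localTime (k:ℤ) n n le_rfl ω ω' h,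
    dependsOn_upCount 0 n n le_rfl ω ω' h]

lemma dependsOn_Hit (n : ℕ) {ω ω' : Ω} (h : ∀ i, 1 ≤ i → i ≤ n → X i ω = X i ω') :
    Hit X N n ω ↔ Hit X N n ω' := by
  unfold Hit
  constructor
  · rintro ⟨j, hj, hju⟩
    exact ⟨j, hj, by rw [← dependsOn_upCount 0 n j hj ω ω' h]; exact hju⟩
  · rintro ⟨j, hj, hju⟩
    exact ⟨j, hj, by rw [dependsOn_upCount 0 n j hj ω ω' h]; exact hju⟩

lemma dependsOn_Y (n : ℕ) : DependsOn X n (Y X k N n) := by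
  induction n with
  | zero => exact dependsOn_M 0
  | succ n ih =>
    intro ω ω' h
    have hn : ∀ i, 1 ≤ i → i ≤ n → X i ω = X i ω' := fun i h1 h2 => h i h1 (by omega)
    show (if Hit X N n ω then Y X k N n ω else M X k (n+1) ω)
        = (if Hit X N n ω' then Y X k N n ω' else M X k (n+1) ω')
    by_cases hh : Hit X N n ω
    · rw [if_pos hh, if_pos ((dependsOn_Hit n hn).1 hh), ih ω ω' hn]
    · rw [if_neg hh, if_neg (fun c => hh ((dependsOn_Hit n hn).2 c)),
        dependsOn_M (n+1) ω ω' h]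

lemma measurableSet_Hit (hX : ∀ i, Measurable (X i)) (n : ℕ) :
    MeasurableSet {ω | Hit X N n ω} := by
  classical
  have hdep : DependsOn X n (fun ω => if Hit X N n ω then (1 : ℝ≥0∞) else 0) := by
    intro ω ω' h
    dsimp only
    by_cases hh : Hit X N n ω
    · rw [if_pos hh, if_pos ((dependsOn_Hit n h).1 hh)]
    · rw [if_neg hh, if_neg (fun c => hh ((dependsOn_Hit n h).2 c))]
  have hm : Measurable (fun ω => if Hit X N n ω then (1 : ℝ≥0∞) else 0) :=
    measurable_of_dependsOn hdep hX
  have : {ω | Hit X N n ω}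
      = (fun ω => if Hit X N n ω then (1 : ℝ≥0∞) else 0) ⁻¹' {1} := by
    ext ω
    by_cases hh : Hit X N n ω <;> simp [hh]
  rw [this]
  exact hm (MeasurableSet.singleton 1)

lemma measurable_Y (hX : ∀ i, Measurable (X i)) (n : ℕ) : Measurable (Y X k N n) :=
  measurable_of_dependsOn (dependsOn_Y n) hX

lemma measurable_M (hX : ∀ i, Measurable (X i)) (n : ℕ) : Measurable (M X k n) :=
  measurable_of_dependsOn (dependsOn_M n) hX

/-- if the walk hasn't completed `N` upward excursions by time `n`,
the stopped process agrees with `M` -/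
lemma Y_eq_M_of_not_hit (n : ℕ) (ω : Ω) (h : ¬ Hit X N n ω) : Y X k N n ω = M X k n ω := by
  cases n with
  | zero => rfl
  | succ n =>
    have hn : ¬ Hit X N n ω := by
      intro ⟨j, hj, hju⟩
      exact h ⟨j, by omega, hju⟩
    show (if Hit X N n ω then Y X k N n ω else M X k (n+1) ω) = M X k (n+1) ω
    rw [if_neg hn]

/-! ### The expectation of the stopped process is non-increasing -/

lemma steps_ae (hX : IsSSRW P X) : ∀ᵐ ω ∂P, Steps X ω := by
  have : IsProbabilityMeasure P := hX.2.1.isProbabilityMeasure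
  rw [show (fun ω => Steps X ω) = fun ω => ∀ i, X i ω = 1 ∨ X i ω = -1 from rfl]
  rw [ae_all_iff]
  intro i
  have hA : MeasurableSet {ω | X i ω = 1} := hX.1 i (MeasurableSet.singleton 1)
  have hB : MeasurableSet {ω | X i ω = -1} := hX.1 i (MeasurableSet.singleton (-1))
  have hdisj : Disjoint {ω | X i ω = 1} {ω | X i ω = -1} := by
    rw [Set.disjoint_left]
    intro ω h1 h2
    simp only [Set.mem_setOf_eq] at h1 h2
    omega
  have hU : P ({ω | X i ω = 1} ∪ {ω | X i ω = -1}) = 1 := by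
    rw [measure_union hdisj hB, (hX.2.2 i).1, (hX.2.2 i).2, ENNReal.div_add_div_same,
      one_add_one_eq_two]
    exact ENNReal.div_self (by norm_num) ENNReal.ofNat_ne_top
  have hcompl : P (({ω | X i ω = 1} ∪ {ω | X i ω = -1})ᶜ) = 0 := by
    rw [measure_compl (hA.union hB) (measure_ne_top P _), hU, measure_univ, tsub_self]
  rw [Filter.eventually_iff, mem_ae_iff]
  exact hcompl

lemma lintegral_Y_succ_le (hX : IsSSRW P X) (hk : 1 ≤ k) (n : ℕ) :
    ∫⁻ ω, Y X k N (n + 1) ω ∂P ≤ ∫⁻ ω, Y X k N n ω ∂P := by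
  classical
  set s : Set Ω := {ω | Hit X N n ω} with hs_def
  have hs : MeasurableSet s := measurableSet_Hit hX.1 n
  set F1 : Ω → ℝ≥0∞ :=
    fun ω => if Hit X N n ω then 0 else ENNReal.ofReal (nextVal X k 1 n ω) with hF1
  set F2 : Ω → ℝ≥0∞ :=
    fun ω => if Hit X N n ω then 0 else ENNReal.ofReal (nextVal X k (-1) n ω) with hF2
  have hdepF : ∀ (t : ℤ), DependsOn X n
      (fun ω => if Hit X N n ω then 0 else ENNReal.ofReal (nextVal X k t n ω)) := by
    intro t ω ω' h
    dsimp only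
    by_cases hh : Hit X N n ω
    · rw [if_pos hh, if_pos ((dependsOn_Hit n h).1 hh)]
    · rw [if_neg hh, if_neg (fun c => hh ((dependsOn_Hit n h).2 c))]
      exact dependsOn_nextVal t n ω ω' h
  have hF1dep : DependsOn X n F1 := hdepF 1
  have hF2dep : DependsOn X n F2 := hdepF (-1)
  have hF1m : Measurable F1 := measurable_of_dependsOn hF1dep hX.1
  have hF2m : Measurable F2 := measurable_of_dependsOn hF2dep hX.1
  set I1 : Ω → ℝ≥0∞ :=
    fun ω => ({ω' | X (n + 1) ω' = 1}).indicator (fun _ => (1 : ℝ≥0∞)) ω with hI1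
  set I2 : Ω → ℝ≥0∞ :=
    fun ω => ({ω' | X (n + 1) ω' = -1}).indicator (fun _ => (1 : ℝ≥0∞)) ω with hI2
  have hI1m : Measurable I1 :=
    measurable_one.indicator (hX.1 (n + 1) (MeasurableSet.singleton 1))
  have hI2m : Measurable I2 :=
    measurable_one.indicator (hX.1 (n + 1) (MeasurableSet.singleton (-1)))
  -- a.e. decomposition of `Y (n+1)`
  have hae : ∀ᵐ ω ∂P, Y X k N (n + 1) ω
      = s.indicator (Y X k N n) ω + (F1 ω * I1 ω + F2 ω * I2 ω) := by
    filter_upwards [steps_ae hX] with ω hω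
    show (if Hit X N n ω then Y X k N n ω else M X k (n + 1) ω) = _
    by_cases hh : Hit X N n ω
    · rw [if_pos hh, Set.indicator_of_mem (by exact hh), hF1, hF2]
      simp only [if_pos hh]
      simp
    · rw [if_neg hh, Set.indicator_of_notMem (by exact hh), hF1, hF2]
      simp only [if_neg hh]
      rcases hω (n + 1) with h1 | h1
      · have e1 : I1 ω = 1 := by
          rw [hI1]; exact Set.indicator_of_mem (by exact h1) _
        have e2 : I2 ω = 0 := by
          rw [hI2]; refine Set.indicator_of_notMem ?_ _
          simp only [Set.mem_setOf_eq, h1]; omega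
        rw [e1, e2, mul_one, mul_zero, add_zero, zero_add]
        unfold M
        rw [Mval_succ hω n, h1]
      · have e1 : I1 ω = 0 := by
          rw [hI1]; refine Set.indicator_of_notMem ?_ _
          simp only [Set.mem_setOf_eq, h1]; omega
        have e2 : I2 ω = 1 := by
          rw [hI2]; exact Set.indicator_of_mem (by exact h1) _
        rw [e1, e2, mul_one, mul_zero, zero_add, zero_add]
        unfold M
        rw [Mval_succ hω n, h1]
  have hprob1 : P {ω' | X (n + 1) ω' = 1} = 1 / 2 := (hX.2.2 (n + 1)).1
  have hprob2 : P {ω' | X (n + 1) ω' = -1} = 1 / 2 := (hX.2.2 (n + 1)).2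
  calc ∫⁻ ω, Y X k N (n + 1) ω ∂P
      = ∫⁻ ω, (s.indicator (Y X k N n) ω + (F1 ω * I1 ω + F2 ω * I2 ω)) ∂P :=
        lintegral_congr_ae hae
    _ = ∫⁻ ω, s.indicator (Y X k N n) ω ∂P + ∫⁻ ω, (F1 ω * I1 ω + F2 ω * I2 ω) ∂P := by
        exact lintegral_add_left ((measurable_Y hX.1 n).indicator hs) _
    _ = ∫⁻ ω, s.indicator (Y X k N n) ω ∂P
          + (∫⁻ ω, F1 ω * I1 ω ∂P + ∫⁻ ω, F2 ω * I2 ω ∂P) := by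
        rw [lintegral_add_left (f := fun ω => F1 ω * I1 ω) (hF1m.mul hI1m)]
    _ = ∫⁻ ω, s.indicator (Y X k N n) ω ∂P
          + (1 / 2 * ∫⁻ ω, F1 ω ∂P + 1 / 2 * ∫⁻ ω, F2 ω ∂P) := by
        rw [lintegral_mul_indicator_step hX n hF1dep 1,
          lintegral_mul_indicator_step hX n hF2dep (-1), hprob1, hprob2]
    _ = ∫⁻ ω, s.indicator (Y X k N n) ω ∂P + 1 / 2 * ∫⁻ ω, (F1 ω + F2 ω) ∂P := by
        rw [lintegral_add_left hF1m, mul_add]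
    _ ≤ ∫⁻ ω, s.indicator (Y X k N n) ω ∂P
          + 1 / 2 * ∫⁻ ω, 2 * sᶜ.indicator (M X k n) ω ∂P := by
        refine add_le_add le_rfl (mul_le_mul_right (lintegral_mono fun ω => ?_) _)
        -- pointwise: F1 + F2 ≤ 2 * indicator
        by_cases hh : Hit X N n ω
        · rw [hF1, hF2]
          simp only [if_pos hh]
          simp
        · rw [hF1, hF2]
          simp only [if_neg hh]
          rw [Set.indicator_of_mem (by exact hh : ω ∈ sᶜ)]
          rw [← ENNReal.ofReal_add (nextVal_nonneg hk 1 n ω) (nextVal_nonneg hk (-1) n ω)]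
          calc ENNReal.ofReal (nextVal X k 1 n ω + nextVal X k (-1) n ω)
              ≤ ENNReal.ofReal (2 * Mval X k n ω) :=
                ENNReal.ofReal_le_ofReal (step_sum_le hk n ω)
            _ = 2 * M X k n ω := by
                rw [ENNReal.ofReal_mul (by norm_num : (0:ℝ) ≤ 2)]
                congr 1
                simp [ENNReal.ofReal_ofNat]
    _ = ∫⁻ ω, s.indicator (Y X k N n) ω ∂P + ∫⁻ ω, sᶜ.indicator (M X k n) ω ∂P := by
        congr 1
        rw [lintegral_const_mul 2 ((measurable_M hX.1 n).indicator hs.compl)]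
        rw [← mul_assoc, one_div, ENNReal.inv_mul_cancel (by norm_num) ENNReal.ofNat_ne_top,
          one_mul]
    _ = ∫⁻ ω, s.indicator (Y X k N n) ω ∂P + ∫⁻ ω, sᶜ.indicator (Y X k N n) ω ∂P := by
        congr 1
        refine lintegral_congr fun ω => ?_
        by_cases hh : ω ∈ sᶜ
        · rw [Set.indicator_of_mem hh, Set.indicator_of_mem hh,
            Y_eq_M_of_not_hit n ω (by exact hh)]
        · rw [Set.indicator_of_notMem hh, Set.indicator_of_notMem hh]
    _ = ∫⁻ ω, Y X k N n ω ∂P := by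
        rw [lintegral_indicator hs, lintegral_indicator hs.compl]
        exact lintegral_add_compl _ hs

lemma lintegral_Y_le_one (hX : IsSSRW P X) (hk : 1 ≤ k) (n : ℕ) :
    ∫⁻ ω, Y X k N n ω ∂P ≤ 1 := by
  have : IsProbabilityMeasure P := hX.2.1.isProbabilityMeasure
  induction n with
  | zero =>
    have : ∀ ω, Y X k N 0 ω = 1 := by
      intro ω
      show M X k 0 ω = 1
      unfold M
      rw [Mval_zero 0 ω rfl, ENNReal.ofReal_one]
    simp only [this]
    rw [lintegral_one, measure_univ]
  | succ n ih => exact le_trans (lintegral_Y_succ_le hX hk n) ih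

/-! ### Final assembly -/

lemma upCount_const_exponent (hk : 1 ≤ k) (hN : 1 ≤ N) :
    lam k * (5 * (N : ℝ)) - mu k * (N : ℝ) = (N : ℝ) / (4 * (k : ℝ)) := by
  have h0 : (k : ℝ) ≠ 0 := by
    have := kR_pos hk; linarith
  unfold lam mu
  field_simp
  ring

theorem final (P : Measure Ω) [IsProbabilityMeasure P] (X : ℕ → Ω → ℤ)
    (hX : IsSSRW P X) (K : ℕ) (hK : 1 ≤ K) (k : ℕ) (hk1 : 1 ≤ k) (hkK : k ≤ K)
    (N : ℕ) (hN : 1 ≤ N) :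
    P {ω | 5 * N ≤ localTime X (k : ℤ) (rhoPlus X N ω) ω}
      ≤ ENNReal.ofReal (Real.exp (-(N : ℝ) / (4 * (K : ℝ)))) := by
  classical
  set c : ℝ≥0∞ := ENNReal.ofReal (Real.exp ((N : ℝ) / (4 * (k : ℝ)))) with hc_def
  set L : Ω → ℝ≥0∞ := fun ω => liminf (fun n => Y X k N n ω) atTop with hL_def
  have hLmeas : Measurable L := Measurable.liminf (measurable_Y hX.1)
  -- ∫ L ≤ 1 by Fatou
  have hint1 : ∫⁻ ω, L ω ∂P ≤ 1 := by
    calc ∫⁻ ω, L ω ∂P ≤ liminf (fun n => ∫⁻ ω, Y X k N n ω ∂P) atTop :=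
          lintegral_liminf_le (measurable_Y hX.1)
      _ ≤ 1 := by
          have hle : ∀ n, ∫⁻ ω, Y X k N n ω ∂P ≤ 1 := lintegral_Y_le_one hX hk1
          calc liminf (fun n => ∫⁻ ω, Y X k N n ω ∂P) atTop
              ≤ liminf (fun _ : ℕ => (1 : ℝ≥0∞)) atTop :=
                Filter.liminf_le_liminf (Filter.Eventually.of_forall hle)
            _ = 1 := Filter.liminf_const 1
  -- on good paths in the target event, L is large
  have h2 : ∀ ω, 5 * N ≤ localTime X (k : ℤ) (rhoPlus X N ω) ω → Steps X ω → c ≤ L ω := by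
    intro ω hA hst
    set Sset : Set ℕ := {n | upCount X 0 n ω = N} with hSset
    have hne : Sset.Nonempty := by
      by_contra hne
      rw [Set.not_nonempty_iff_eq_empty] at hne
      have hρ0 : rhoPlus X N ω = 0 := by
        unfold rhoPlus
        rw [show {n | upCount X 0 n ω = N} = (∅ : Set ℕ) from hne, Nat.sInf_empty]
      rw [hρ0, localTime_zero] at hA
      omega
    have hρmem : upCount X 0 (rhoPlus X N ω) ω = N := Nat.sInf_mem hne
    have hρpos : rhoPlus X N ω ≠ 0 := by
      intro h
      rw [h, upCount_zero] at hρmem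
      omega
    obtain ⟨m, hm⟩ : ∃ m, rhoPlus X N ω = m + 1 :=
      ⟨rhoPlus X N ω - 1, by omega⟩
    have hnotHit : ¬ Hit X N m ω := by
      rintro ⟨j, hj, hju⟩
      have : rhoPlus X N ω ≤ j := Nat.sInf_le hju
      omega
    have hYconst : ∀ d, Y X k N (m + 1 + d) ω = M X k (m + 1) ω := by
      intro d
      induction d with
      | zero =>
        show (if Hit X N m ω then Y X k N m ω else M X k (m + 1) ω) = M X k (m + 1) ω
        rw [if_neg hnotHit]
      | succ d ih =>
        have hHit : Hit X N (m + 1 + d) ω := ⟨m + 1, by omega, by rw [← hm]; exact hρmem⟩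
        show (if Hit X N (m + 1 + d) ω then Y X k N (m + 1 + d) ω
            else M X k (m + 1 + d + 1) ω) = M X k (m + 1) ω
        rw [if_pos hHit, ih]
    have hLω : L ω = M X k (m + 1) ω := by
      have hev : (fun n => Y X k N n ω) =ᶠ[atTop] (fun _ => M X k (m + 1) ω) := by
        rw [Filter.eventuallyEq_iff_exists_mem]
        refine ⟨{n | m + 1 ≤ n}, Filter.mem_atTop _, ?_⟩
        intro n hn
        obtain ⟨d, rfl⟩ := Nat.exists_eq_add_of_le (hn : m + 1 ≤ n)
        exact hYconst d
      have htend : Tendsto (fun n => Y X k N n ω) atTop (nhds (M X k (m + 1) ω)) :=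
        Filter.Tendsto.congr' hev.symm tendsto_const_nhds
      exact htend.liminf_eq
    -- identify the walk position and the excursion count at time `m+1`
    rw [hm] at hρmem hA
    have hwalk : walk X (m + 1) ω = 0 := by
      have hsucc := upCount_succ hst m
      have hum : upCount X 0 m ω ≠ N := fun h => hnotHit ⟨m, le_rfl, h⟩
      by_cases hcond : (walk X (m + 1) ω = 0 ∧ walk X m ω = 1)
      · exact hcond.1
      · rw [if_neg hcond] at hsucc
        omega
    rw [hLω]
    unfold M Mval
    rw [hwalk, g_zero, mul_one, hρmem, hc_def]
    apply ENNReal.ofReal_le_ofReal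
    apply Real.exp_le_exp.2
    have hξ : (5 * N : ℝ) ≤ (localTime X (k : ℤ) (m + 1) ω : ℝ) := by
      exact_mod_cast hA
    have hlam := lam_pos hk1
    have hkey := upCount_const_exponent hk1 hN
    nlinarith [mul_le_mul_of_nonneg_left hξ hlam.le]
  -- Markov + Fatou conclusion
  have hbad : P {ω | ¬ Steps X ω} = 0 := ae_iff.1 (steps_ae hX)
  have hsub : {ω | 5 * N ≤ localTime X (k : ℤ) (rhoPlus X N ω) ω}
      ⊆ {ω | c ≤ L ω} ∪ {ω | ¬ Steps X ω} := by
    intro ω hω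
    by_cases hst : Steps X ω
    · exact Or.inl (h2 ω hω hst)
    · exact Or.inr hst
  have hmain : P {ω | 5 * N ≤ localTime X (k : ℤ) (rhoPlus X N ω) ω} ≤ P {ω | c ≤ L ω} := by
    calc P {ω | 5 * N ≤ localTime X (k : ℤ) (rhoPlus X N ω) ω}
        ≤ P ({ω | c ≤ L ω} ∪ {ω | ¬ Steps X ω}) := measure_mono hsub
      _ ≤ P {ω | c ≤ L ω} + P {ω | ¬ Steps X ω} := measure_union_le _ _
      _ = P {ω | c ≤ L ω} := by rw [hbad, add_zero]
  have hmarkov : c * P {ω | c ≤ L ω} ≤ 1 :=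
    le_trans (mul_meas_ge_le_lintegral₀ hLmeas.aemeasurable c) hint1
  have hc0 : c ≠ 0 := by
    rw [hc_def]
    exact (ENNReal.ofReal_pos.2 (Real.exp_pos _)).ne'
  have hcT : c ≠ ⊤ := ENNReal.ofReal_ne_top
  have hfin : P {ω | c ≤ L ω} ≤ c⁻¹ := by
    calc P {ω | c ≤ L ω} = c⁻¹ * (c * P {ω | c ≤ L ω}) := by
          rw [← mul_assoc, ENNReal.inv_mul_cancel hc0 hcT, one_mul]
      _ ≤ c⁻¹ * 1 := mul_le_mul_right hmarkov _
      _ = c⁻¹ := mul_one _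
  have hcinv : c⁻¹ = ENNReal.ofReal (Real.exp (-((N : ℝ) / (4 * (k : ℝ))))) := by
    rw [hc_def, ← ENNReal.ofReal_inv_of_pos (Real.exp_pos _), ← Real.exp_neg]
  have hlast : ENNReal.ofReal (Real.exp (-((N : ℝ) / (4 * (k : ℝ)))))
      ≤ ENNReal.ofReal (Real.exp (-(N : ℝ) / (4 * (K : ℝ)))) := by
    apply ENNReal.ofReal_le_ofReal
    apply Real.exp_le_exp.2
    rw [neg_div]
    apply neg_le_neg
    apply div_le_div_of_nonneg_left (by positivity) ?_ ?_
    · have := kR_pos hk1; linarith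
    · have : (k : ℝ) ≤ (K : ℝ) := by exact_mod_cast hkK
      linarith
  calc P {ω | 5 * N ≤ localTime X (k : ℤ) (rhoPlus X N ω) ω}
      ≤ P {ω | c ≤ L ω} := hmain
    _ ≤ c⁻¹ := hfin
    _ = ENNReal.ofReal (Real.exp (-((N : ℝ) / (4 * (k : ℝ))))) := hcinv
    _ ≤ ENNReal.ofReal (Real.exp (-(N : ℝ) / (4 * (K : ℝ)))) := hlast

end St7

/-- For all integers `K ≥ 1`, `1 ≤ k ≤ K` and `N ≥ 1`,
`P(ξ(k, ρ_N⁺) ≥ 5N) ≤ exp(−N/(4K))`. -/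
theorem statement7 (P : Measure Ω) [IsProbabilityMeasure P] (X : ℕ → Ω → ℤ)
    (hX : IsSSRW P X) (K : ℕ) (hK : 1 ≤ K) (k : ℕ) (hk1 : 1 ≤ k) (hkK : k ≤ K)
    (N : ℕ) (hN : 1 ≤ N) :
    P {ω | 5 * N ≤ localTime X (k : ℤ) (rhoPlus X N ω) ω}
      ≤ ENNReal.ofReal (Real.exp (-(N : ℝ) / (4 * (K : ℝ)))) :=
  St7.final P X hX K hK k hk1 hkK N hN
end

section
/- For all integers N ≥ 1 and n ≥ 1, P( ρ_N > 2n ) ≤ N / (2n+2)^{1/2}. -/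
open MeasureTheory ProbabilityTheory Filter
open scoped Classical ENNReal

variable {Ω : Type*} [MeasurableSpace Ω]

namespace SSRW10

/-- All boolean lists of length `L`. -/
def allB : ℕ → Finset (List Bool)
  | 0 => {[]}
  | L+1 => (allB L).biUnion fun l => {true :: l, false :: l}

lemma mem_allB {L : ℕ} {l : List Bool} : l ∈ allB L ↔ l.length = L := by
  induction L generalizing l with
  | zero => simp [allB, List.length_eq_zero_iff]
  | succ L ih =>
    simp only [allB, Finset.mem_biUnion, Finset.mem_insert, Finset.mem_singleton]
    constructor
    · rintro ⟨a, ha, rfl | rfl⟩ <;> simp [ih.1 ha]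
    · intro h
      cases l with
      | nil => simp at h
      | cons b t =>
        refine ⟨t, ih.2 (by simpa using h), ?_⟩
        cases b <;> simp

def stepZ (b : Bool) : ℤ := if b then 1 else -1

def ssum (l : List Bool) : ℤ := (l.map stepZ).sum

@[simp] lemma ssum_nil : ssum [] = 0 := rfl
@[simp] lemma ssum_cons (b : Bool) (l : List Bool) : ssum (b :: l) = stepZ b + ssum l := by
  simp [ssum]
lemma ssum_append (a b : List Bool) : ssum (a ++ b) = ssum a + ssum b := by
  simp [ssum]

/-- position after `k` steps -/
def posAt (l : List Bool) (k : ℕ) : ℤ := ssum (l.take k)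

@[simp] lemma posAt_zero (l : List Bool) : posAt l 0 = 0 := rfl
lemma posAt_length (l : List Bool) : posAt l l.length = ssum l := by simp [posAt]
lemma posAt_of_length_le (l : List Bool) {k : ℕ} (h : l.length ≤ k) : posAt l k = ssum l := by
  simp [posAt, List.take_of_length_le h]

lemma posAt_cons_succ (b : Bool) (l : List Bool) (k : ℕ) :
    posAt (b :: l) (k+1) = stepZ b + posAt l k := by simp [posAt]

lemma posAt_append_of_le {a : List Bool} (b : List Bool) {k : ℕ} (h : k ≤ a.length) :
    posAt (a ++ b) k = posAt a k := by
  simp [posAt, List.take_append, Nat.sub_eq_zero_of_le h]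

lemma posAt_append_add (a b : List Bool) (k : ℕ) :
    posAt (a ++ b) (a.length + k) = ssum a + posAt b k := by
  have h1 : (a ++ b).take (a.length + k) = a ++ b.take k := by
    rw [List.take_append]
    simp
  simp [posAt, h1, ssum_append]

lemma posAt_succ_sub (l : List Bool) (k : ℕ) (hk : k < l.length) :
    posAt l (k+1) = posAt l k + stepZ (l.get ⟨k, hk⟩) := by
  have : l.take (k+1) = l.take k ++ [l.get ⟨k, hk⟩] := by
    rw [List.take_succ]
    simp [List.getElem?_eq_getElem hk]
  rw [posAt, posAt, this, ssum_append]
  simp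

lemma stepZ_cases (b : Bool) : stepZ b = 1 ∨ stepZ b = -1 := by cases b <;> simp [stepZ]

/-- parity: `posAt l k` has the same parity as `k` (for `k ≤ length`). -/
lemma even_ssum_add_length (l : List Bool) : (2 : ℤ) ∣ (ssum l + l.length) := by
  induction l with
  | nil => simp
  | cons b t ih =>
    have : ssum (b :: t) + (b :: t).length = (stepZ b + 1) + (ssum t + t.length) := by
      push_cast; simp [ssum_cons]; ring
    rw [this]
    rcases stepZ_cases b with h | h <;> rw [h] <;> [skip; simpa using ih]
    exact dvd_add (by norm_num) ih

lemma ssum_ne_zero_of_odd (l : List Bool) (h : ¬ (2 ∣ l.length)) : ssum l ≠ 0 := by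
  intro h0
  have := even_ssum_add_length l
  rw [h0, zero_add] at this
  exact h (by exact_mod_cast Int.ofNat_dvd.mp (by exact_mod_cast this))

end SSRW10

namespace SSRW10

lemma card_allB (L : ℕ) : (allB L).card = 2 ^ L := by
  induction L with
  | zero => simp [allB]
  | succ L ih =>
    rw [allB, Finset.card_biUnion]
    · have : ∀ l ∈ allB L, ({true :: l, false :: l} : Finset (List Bool)).card = 2 := by
        intro l _
        rw [Finset.card_insert_of_notMem (by simp), Finset.card_singleton]
      rw [Finset.sum_congr rfl this, Finset.sum_const, smul_eq_mul, ih]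
      ring
    · intro a _ b _ hab
      simp only [Finset.disjoint_left, Finset.mem_insert, Finset.mem_singleton]
      rintro x (rfl | rfl) (h | h) <;> simp_all

/-- filter over `allB (L+1)` splits by head. -/
lemma card_filter_allB_succ (L : ℕ) (Q : List Bool → Prop) [DecidablePred Q] :
    ((allB (L+1)).filter Q).card
      = ((allB L).filter fun l => Q (true :: l)).card
        + ((allB L).filter fun l => Q (false :: l)).card := by
  rw [allB, Finset.filter_biUnion, Finset.card_biUnion]
  · have key : ∀ l ∈ allB L, (({true :: l, false :: l} : Finset (List Bool)).filter Q).card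
        = (if Q (true :: l) then 1 else 0) + (if Q (false :: l) then 1 else 0) := by
      intro l _
      have hne : (true :: l) ≠ (false :: l) := by simp
      have : ({true :: l, false :: l} : Finset (List Bool)).filter Q
          = (if Q (true :: l) then {true :: l} else ∅) ∪ (if Q (false :: l) then {false :: l} else ∅) := by
        ext x
        by_cases h1 : Q (true :: l) <;> by_cases h2 : Q (false :: l) <;>
          simp [Finset.mem_filter, h1, h2] <;> aesop
      rw [this, Finset.card_union_of_disjoint]
      · congr 1 <;> split <;> simp
      · by_cases h1 : Q (true :: l) <;> by_cases h2 : Q (false :: l) <;> simp [h1, h2, hne]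
    rw [Finset.sum_congr rfl key, Finset.sum_add_distrib, Finset.card_filter, Finset.card_filter]
  · intro a _ b _ hab
    simp only [Finset.disjoint_left, Finset.mem_filter, Finset.mem_insert, Finset.mem_singleton]
    rintro x ⟨rfl | rfl, -⟩ ⟨h | h, -⟩ <;> simp_all

/-- The split-at-`t` product lemma. -/
lemma card_filter_split (L t : ℕ) (ht : t ≤ L) (Q1 Q2 : List Bool → Prop) [DecidablePred Q1] [DecidablePred Q2] :
    ((allB L).filter fun l => Q1 (l.take t) ∧ Q2 (l.drop t)).card
      = ((allB t).filter Q1).card * ((allB (L - t)).filter Q2).card := by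
  rw [← Finset.card_product]
  apply Finset.card_nbij' (fun l => (l.take t, l.drop t)) (fun p => p.1 ++ p.2)
  · intro l hl
    simp only [Finset.mem_coe, Finset.mem_filter, mem_allB] at hl ⊢
    obtain ⟨hlen, h1, h2⟩ := hl
    simp only [Finset.mem_product, Finset.mem_filter, mem_allB]
    exact ⟨⟨by simp [hlen, ht], h1⟩, ⟨by simp [hlen], h2⟩⟩
  · intro p hp
    simp only [Finset.mem_coe, Finset.mem_product, Finset.mem_filter, mem_allB] at hp
    obtain ⟨⟨h1len, h1⟩, ⟨h2len, h2⟩⟩ := hp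
    simp only [Finset.mem_coe, Finset.mem_filter, mem_allB, List.length_append, h1len, h2len]
    have e1 : (p.1 ++ p.2).take t = p.1 := by
      rw [List.take_append, h1len, List.take_of_length_le h1len.le]
      simp
    have e2 : (p.1 ++ p.2).drop t = p.2 := by
      rw [List.drop_append, h1len, List.drop_of_length_le h1len.le]
      simp
    exact ⟨by omega, by rw [e1]; exact h1, by rw [e2]; exact h2⟩
  · intro l hl
    simp only [Finset.mem_coe, Finset.mem_filter, mem_allB] at hl
    exact List.take_append_drop t l
  · intro p hp
    simp only [Finset.mem_coe, Finset.mem_product, Finset.mem_filter, mem_allB] at hp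
    obtain ⟨⟨h1len, -⟩, -⟩ := hp
    beta_reduce
    rw [List.take_append, List.drop_append, h1len,
      List.take_of_length_le h1len.le, List.drop_of_length_le h1len.le]
    simp

/-- Negation bijection. -/
lemma map_not_not (l : List Bool) : (l.map not).map not = l := by
  rw [List.map_map]
  have : (not ∘ not) = id := by funext b; simp
  rw [this, List.map_id]

lemma card_filter_neg (L : ℕ) (Q : List Bool → Prop) [DecidablePred Q] :
    ((allB L).filter Q).card = ((allB L).filter fun l => Q (l.map not)).card := by
  apply Finset.card_nbij' (fun l => l.map not) (fun l => l.map not)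
  · intro l hl
    simp only [Finset.mem_coe, Finset.mem_filter, mem_allB] at hl ⊢
    exact ⟨by simp [hl.1], by rw [map_not_not]; exact hl.2⟩
  · intro l hl
    simp only [Finset.mem_coe, Finset.mem_filter, mem_allB] at hl ⊢
    exact ⟨by simp [hl.1], hl.2⟩
  · intro l _; exact map_not_not l
  · intro l _; exact map_not_not l

lemma ssum_map_not (l : List Bool) : ssum (l.map not) = - ssum l := by
  induction l with
  | nil => simp
  | cons b t ih => cases b <;> simp [ssum_cons, ih, stepZ] <;> ring

lemma posAt_map_not (l : List Bool) (k : ℕ) : posAt (l.map not) k = - posAt l k := by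
  simp [posAt, ← List.map_take, ssum_map_not]

/-- count of lists with `count true = k` is `choose L k`. -/
lemma card_count_true (L k : ℕ) :
    ((allB L).filter fun l => l.count true = k).card = Nat.choose L k := by
  induction L generalizing k with
  | zero =>
    cases k <;> simp [allB, Finset.filter_singleton, List.count_nil]
  | succ L ih =>
    rw [card_filter_allB_succ L (fun l => l.count true = k)]
    cases k with
    | zero =>
      have e1 : ((allB L).filter fun l => (true :: l).count true = 0) = ∅ := by
        rw [Finset.filter_eq_empty_iff]
        intro l _
        simp [List.count_cons]
      have e2 : ((allB L).filter fun l => (false :: l).count true = 0)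
          = ((allB L).filter fun l => l.count true = 0) :=
        Finset.filter_congr fun l _ => by simp [List.count_cons]
      rw [e1, e2, ih 0]
      simp
    | succ k =>
      have e1 : ((allB L).filter fun l => (true :: l).count true = k + 1)
          = ((allB L).filter fun l => l.count true = k) :=
        Finset.filter_congr fun l _ => by simp [List.count_cons]
      have e2 : ((allB L).filter fun l => (false :: l).count true = k + 1)
          = ((allB L).filter fun l => l.count true = k + 1) :=
        Finset.filter_congr fun l _ => by simp [List.count_cons]
      rw [e1, e2, ih k, ih (k+1), Nat.choose_succ_succ]

lemma ssum_eq (l : List Bool) : ssum l = 2 * (l.count true : ℤ) - l.length := by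
  induction l with
  | nil => simp
  | cons b t ih => cases b <;> simp [ssum_cons, ih, stepZ, List.count_cons] <;> push_cast <;> ring

end SSRW10

namespace SSRW10

/-- Discrete IVT (downward crossing). -/
lemma exists_posAt_eq (l : List Bool) (v : ℤ) :
    ∀ d a, a + d ≤ l.length → v ≤ posAt l a → posAt l (a + d) ≤ v →
      ∃ k, a ≤ k ∧ k ≤ a + d ∧ posAt l k = v := by
  intro d
  induction d with
  | zero =>
    intro a h hv1 hv2
    exact ⟨a, le_refl a, by omega, le_antisymm (by simpa using hv2) hv1⟩
  | succ d ih =>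
    intro a h hv1 hv2
    rcases eq_or_lt_of_le hv1 with heq | hlt
    · exact ⟨a, le_refl a, by omega, heq.symm⟩
    · have ha : a < l.length := by omega
      have hstep := posAt_succ_sub l a ha
      have h1 : v ≤ posAt l (a + 1) := by
        rcases stepZ_cases (l.get ⟨a, ha⟩) with hs | hs <;> rw [hs] at hstep <;> omega
      have : a + 1 + d ≤ l.length := by omega
      obtain ⟨k, hk1, hk2, hk3⟩ := ih (a + 1) this h1 (by rw [show a + 1 + d = a + (d+1) by ring]; exact hv2)
      exact ⟨k, by omega, by omega, hk3⟩

def hitsNeg (l : List Bool) : Prop := ∃ k ≤ l.length, posAt l k = -1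

lemma hitsNeg_of_ssum_le {l : List Bool} (h : ssum l ≤ -1) : hitsNeg l := by
  obtain ⟨k, _, hk2, hk3⟩ := exists_posAt_eq l (-1) l.length 0 (by simp) (by simp)
    (by rw [zero_add, posAt_length]; exact h)
  exact ⟨k, by omega, hk3⟩

noncomputable def fh (l : List Bool) : ℕ := sInf {k | posAt l k = -1}

lemma fh_spec {l : List Bool} (h : hitsNeg l) :
    posAt l (fh l) = -1 ∧ (∀ k < fh l, posAt l k ≠ -1) ∧ fh l ≤ l.length := by
  obtain ⟨k, hk1, hk2⟩ := h
  have hne : {k | posAt l k = -1}.Nonempty := ⟨k, hk2⟩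
  have h1 : posAt l (fh l) = -1 := Nat.sInf_mem hne
  have h3 : fh l ≤ k := Nat.sInf_le hk2
  refine ⟨h1, fun j hj hjmem => ?_, le_trans h3 hk1⟩
  have h4 : fh l ≤ j := Nat.sInf_le hjmem
  omega

/-- Reflection map: negate everything after the first visit to `-1`. -/
noncomputable def refl1 (l : List Bool) : List Bool :=
  l.take (fh l) ++ (l.drop (fh l)).map not

lemma refl1_spec {l : List Bool} (h : hitsNeg l) :
    (refl1 l).length = l.length ∧ ssum (refl1 l) = -2 - ssum l ∧ hitsNeg (refl1 l) ∧
      refl1 (refl1 l) = l := by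
  obtain ⟨hfh, hmin, hle⟩ := fh_spec h
  have hlent : (l.take (fh l)).length = (fh l) := by simp [hle]
  have hlen : (refl1 l).length = l.length := by
    simp only [refl1, List.length_append, List.length_map, List.length_take, List.length_drop]
    omega
  have hposle : ∀ k ≤ (fh l), posAt (refl1 l) k = posAt l k := by
    intro k hk
    rw [refl1, posAt_append_of_le _ (by omega)]
    simp only [posAt, List.take_take, min_eq_left hk]
  have hssum : ssum (refl1 l) = -2 - ssum l := by
    have e1 : ssum (refl1 l) = ssum (l.take (fh l)) + ssum ((l.drop (fh l)).map not) := ssum_append _ _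
    have e2 : ssum l = ssum (l.take (fh l)) + ssum (l.drop (fh l)) := by
      conv_lhs => rw [← List.take_append_drop (fh l) l]
      exact ssum_append _ _
    have e3 : ssum (l.take (fh l)) = -1 := by rw [← hfh]; simp [posAt, List.take_take]
    rw [e1, ssum_map_not, e3]
    omega
  have hhits : hitsNeg (refl1 l) := ⟨fh l, by rw [hlen]; exact hle, by rw [hposle (fh l) le_rfl]; exact hfh⟩
  have hfh2 : fh (refl1 l) = (fh l) := by
    have h1 : fh (refl1 l) ≤ (fh l) := Nat.sInf_le (by rw [Set.mem_setOf_eq, hposle (fh l) le_rfl]; exact hfh)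
    rcases eq_or_lt_of_le h1 with heq | hlt
    · exact heq
    · obtain ⟨hf1, -, -⟩ := fh_spec hhits
      rw [hposle _ (le_of_lt hlt)] at hf1
      exact absurd hf1 (hmin _ hlt)
  have hinv : refl1 (refl1 l) = l := by
    rw [refl1, hfh2]
    have e1 : (refl1 l).take (fh l) = l.take (fh l) := by
      rw [refl1, List.take_append, hlent, List.take_of_length_le hlent.le]
      simp
    have e2 : (refl1 l).drop (fh l) = (l.drop (fh l)).map not := by
      rw [refl1, List.drop_append, hlent, List.drop_of_length_le hlent.le]
      simp
    rw [e1, e2, map_not_not, List.take_append_drop]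
  exact ⟨hlen, hssum, hhits, hinv⟩

/-- Reflection principle, counting form. -/
lemma card_reflect (L : ℕ) (y : ℤ) (hy : -1 ≤ y) :
    ((allB L).filter fun l => ssum l = y ∧ hitsNeg l).card
      = ((allB L).filter fun l => ssum l = -2 - y).card := by
  apply Finset.card_nbij' refl1 refl1
  · intro l hl
    simp only [Finset.mem_coe, Finset.mem_filter, mem_allB] at hl ⊢
    obtain ⟨hlen, hs, hh⟩ := hl
    obtain ⟨e1, e2, -, -⟩ := refl1_spec hh
    exact ⟨by rw [e1, hlen], by rw [e2, hs]⟩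
  · intro l hl
    simp only [Finset.mem_coe, Finset.mem_filter, mem_allB] at hl ⊢
    obtain ⟨hlen, hs⟩ := hl
    have hh : hitsNeg l := hitsNeg_of_ssum_le (by omega)
    obtain ⟨e1, e2, e3, -⟩ := refl1_spec hh
    exact ⟨by rw [e1, hlen], by rw [e2, hs]; ring, e3⟩
  · intro l hl
    simp only [Finset.mem_coe, Finset.mem_filter, mem_allB] at hl
    exact (refl1_spec hl.2.2).2.2.2
  · intro l hl
    simp only [Finset.mem_coe, Finset.mem_filter, mem_allB] at hl
    exact (refl1_spec (hitsNeg_of_ssum_le (by omega))).2.2.2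

end SSRW10

namespace SSRW10

def nneg (l : List Bool) : Prop := ∀ k ≤ l.length, 0 ≤ posAt l k

lemma not_nneg_iff {l : List Bool} : ¬ nneg l ↔ hitsNeg l := by
  constructor
  · intro h
    simp only [nneg] at h
    push_neg at h
    obtain ⟨k, hk, hneg⟩ := h
    obtain ⟨j, _, hj2, hj3⟩ := exists_posAt_eq l (-1) k 0 (by simpa using hk) (by simp)
      (by rw [zero_add]; omega)
    exact ⟨j, by omega, hj3⟩
  · rintro ⟨k, hk, hkv⟩ hnn
    have := hnn k hk
    omega

lemma count_true_le (l : List Bool) : l.count true ≤ l.length := List.count_le_length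

lemma count_eq_iff_ssum {l : List Bool} {L k : ℕ} (hlen : l.length = L) :
    l.count true = k ↔ ssum l = 2 * (k : ℤ) - L := by
  rw [ssum_eq, hlen]
  constructor
  · intro h; rw [h]
  · intro h; omega

/-- Key reflection identity. -/
lemma cardNN_add (L k : ℕ) (h2k : L ≤ 2 * k) (hkL : k ≤ L) :
    ((allB L).filter fun l => l.count true = k ∧ nneg l).card + Nat.choose L (k+1)
      = Nat.choose L k := by
  have hsplit : ((allB L).filter fun l => l.count true = k ∧ nneg l).card
        + ((allB L).filter fun l => l.count true = k ∧ ¬ nneg l).card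
      = ((allB L).filter fun l => l.count true = k).card := by
    rw [← Finset.filter_filter, ← Finset.filter_filter,
      Finset.card_filter_add_card_filter_not]
  rw [← card_count_true L k, ← hsplit]
  congr 1
  -- remaining: card (count = k ∧ ¬nneg) = choose L (k+1)
  have e0 : ((allB L).filter fun l => l.count true = k ∧ ¬ nneg l)
      = ((allB L).filter fun l => ssum l = 2 * (k:ℤ) - L ∧ hitsNeg l) := by
    apply Finset.filter_congr
    intro l hl
    rw [count_eq_iff_ssum (mem_allB.1 hl), not_nneg_iff]
  rw [e0, card_reflect L _ (by push_cast; omega)]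
  by_cases hk : k + 1 ≤ L
  · have e1 : ((allB L).filter fun l => ssum l = -2 - (2 * (k:ℤ) - L))
        = ((allB L).filter fun l => l.count true = L - k - 1) := by
      apply Finset.filter_congr
      intro l hl
      rw [count_eq_iff_ssum (mem_allB.1 hl)]
      constructor <;> intro h <;> [skip; skip] <;> rw [h] <;> push_cast <;> omega
    rw [e1, card_count_true]
    rw [show L - k - 1 = L - (k+1) by omega, Nat.choose_symm hk]
  · have hkL' : k = L := by omega
    have e1 : ((allB L).filter fun l => ssum l = -2 - (2 * (k:ℤ) - L)) = ∅ := by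
      rw [Finset.filter_eq_empty_iff]
      intro l hl heq
      have h1 : (l.count true : ℤ) ≥ 0 := by positivity
      have h2 := ssum_eq l
      rw [mem_allB.1 hl] at h2
      omega
    rw [e1, Finset.card_empty]
    rw [hkL']
    exact Nat.choose_succ_self L

lemma nneg_ssum_nonneg {l : List Bool} (h : nneg l) : 0 ≤ ssum l := by
  have := h l.length le_rfl
  rwa [posAt_length] at this

/-- Telescoping: total nonneg-path count from `a` up. -/
lemma sum_cardNN (L : ℕ) : ∀ m a, L ≤ 2 * a → a + m = L + 1 →
    (∑ k ∈ Finset.Ico a (L+1), ((allB L).filter fun l => l.count true = k ∧ nneg l).card)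
      = Nat.choose L a := by
  intro m
  induction m with
  | zero =>
    intro a _ ha
    have : a = L + 1 := by omega
    subst this
    simp [Nat.choose_eq_zero_of_lt]
  | succ m ih =>
    intro a h2a ha
    have haL : a ≤ L := by omega
    rw [Finset.sum_eq_sum_Ico_succ_bot (by omega), ih (a+1) (by omega) (by omega),
      cardNN_add L a h2a haL]

/-- Number of nonnegative paths of length `2n-1` is `C(2n-1, n)`. -/
lemma card_nneg (n : ℕ) (hn : 1 ≤ n) :
    ((allB (2*n-1)).filter nneg).card = Nat.choose (2*n-1) n := by
  set L := 2*n - 1 with hL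
  have key : ((allB L).filter nneg).card
      = ∑ k ∈ Finset.range (L+1), ((allB L).filter fun l => l.count true = k ∧ nneg l).card := by
    rw [Finset.card_eq_sum_card_fiberwise (f := fun l => l.count true)
      (t := Finset.range (L+1)) ?_]
    · apply Finset.sum_congr rfl
      intro k _
      congr 1
      rw [Finset.filter_filter]
      apply Finset.filter_congr
      intro l _
      tauto
    · intro l hl
      simp only [Finset.mem_coe, Finset.mem_filter, mem_allB] at hl
      simp only [Finset.mem_coe, Finset.mem_range]
      have := count_true_le l
      omega
  rw [key]
  have zero_part : ∀ k ∈ Finset.Ico 0 n,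
      ((allB L).filter fun l => l.count true = k ∧ nneg l).card = 0 := by
    intro k hk
    simp only [Finset.mem_Ico] at hk
    rw [Finset.card_eq_zero, Finset.filter_eq_empty_iff]
    rintro l hl ⟨hc, hnn⟩
    have h1 := nneg_ssum_nonneg hnn
    have h2 := ssum_eq l
    rw [mem_allB.1 hl, hc] at h2
    have : (L : ℤ) = 2 * n - 1 := by push_cast; omega
    omega
  rw [Finset.range_eq_Ico, ← Finset.sum_Ico_consecutive _ (Nat.zero_le n) (by omega),
    Finset.sum_congr rfl zero_part]
  simp only [Finset.sum_const_zero, zero_add]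
  exact sum_cardNN L (L + 1 - n) n (by omega) (by omega)

end SSRW10

namespace SSRW10

def zcount (l : List Bool) : ℕ :=
  ((Finset.Icc 1 l.length).filter fun k => posAt l k = 0).card

def spos (l : List Bool) : Prop := ∀ k, 1 ≤ k → k ≤ l.length → 0 < posAt l k
def sneg (l : List Bool) : Prop := ∀ k, 1 ≤ k → k ≤ l.length → posAt l k < 0

lemma zcount_eq_zero_iff {l : List Bool} :
    zcount l = 0 ↔ ∀ k, 1 ≤ k → k ≤ l.length → posAt l k ≠ 0 := by
  rw [zcount, Finset.card_eq_zero, Finset.filter_eq_empty_iff]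
  constructor
  · intro h k h1 h2
    exact h (Finset.mem_Icc.2 ⟨h1, h2⟩)
  · intro h k hk
    rw [Finset.mem_Icc] at hk
    exact h k hk.1 hk.2

lemma zcount_pos_iff {l : List Bool} :
    0 < zcount l ↔ ∃ k, 1 ≤ k ∧ k ≤ l.length ∧ posAt l k = 0 := by
  rw [zcount, Finset.card_pos]
  constructor
  · rintro ⟨k, hk⟩
    simp only [Finset.mem_filter, Finset.mem_Icc] at hk
    exact ⟨k, hk.1.1, hk.1.2, hk.2⟩
  · rintro ⟨k, h1, h2, h3⟩
    exact ⟨k, by simp only [Finset.mem_filter, Finset.mem_Icc]; exact ⟨⟨h1, h2⟩, h3⟩⟩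

lemma card_spos (n : ℕ) (hn : 1 ≤ n) :
    ((allB (2*n)).filter spos).card = Nat.choose (2*n-1) n := by
  have h2n : 2*n = (2*n-1) + 1 := by omega
  rw [h2n, card_filter_allB_succ]
  have e2 : ((allB (2*n-1)).filter fun l => spos (false :: l)) = ∅ := by
    rw [Finset.filter_eq_empty_iff]
    intro l _ hsp
    have := hsp 1 le_rfl (by simp)
    rw [show (1:ℕ) = 0 + 1 from rfl, posAt_cons_succ] at this
    simp [stepZ] at this
  have e1 : ((allB (2*n-1)).filter fun l => spos (true :: l))
      = ((allB (2*n-1)).filter nneg) := by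
    apply Finset.filter_congr
    intro l _
    constructor
    · intro hsp k hk
      have := hsp (k+1) (by omega) (by simp; omega)
      rw [posAt_cons_succ] at this
      simp only [stepZ, if_pos] at this
      omega
    · intro hnn k h1 h2
      obtain ⟨j, rfl⟩ : ∃ j, k = j + 1 := ⟨k - 1, by omega⟩
      rw [posAt_cons_succ]
      have := hnn j (by simp at h2; omega)
      simp only [stepZ, if_pos]
      omega
  rw [e1, e2, card_nneg n hn]
  simp

lemma sneg_iff_spos_not {l : List Bool} : sneg l ↔ spos (l.map not) := by
  constructor
  · intro h k h1 h2
    rw [posAt_map_not]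
    simp only [List.length_map] at h2
    have := h k h1 h2
    omega
  · intro h k h1 h2
    have := h k h1 (by simpa using h2)
    rw [posAt_map_not] at this
    omega

lemma card_sneg (n : ℕ) (hn : 1 ≤ n) :
    ((allB (2*n)).filter sneg).card = Nat.choose (2*n-1) n := by
  rw [← card_spos n hn, card_filter_neg (2*n) spos]
  congr 1
  apply Finset.filter_congr
  intro l _
  exact sneg_iff_spos_not

lemma posAt_one (l : List Bool) (h : 1 ≤ l.length) :
    posAt l 1 = 1 ∨ posAt l 1 = -1 := by
  cases l with
  | nil => simp at h
  | cons b t =>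
    rw [show (1:ℕ) = 0 + 1 from rfl, posAt_cons_succ]
    rcases stepZ_cases b with h | h <;> simp [h]

lemma spos_of_one {l : List Bool} (hz : zcount l = 0) (h1 : posAt l 1 = 1) : spos l := by
  intro k hk1 hk2
  by_contra hc
  push_neg at hc
  obtain ⟨j, hj1, hj2, hj3⟩ := exists_posAt_eq l 0 (k - 1) 1 (by omega)
    (by rw [h1]; omega) (by rw [show 1 + (k-1) = k by omega]; omega)
  exact zcount_eq_zero_iff.1 hz j (by omega) (by omega) hj3

lemma nozero_iff {l : List Bool} (hlen : 1 ≤ l.length) :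
    zcount l = 0 ↔ (spos l ∨ sneg l) := by
  constructor
  · intro hz
    rcases posAt_one l hlen with h1 | h1
    · exact Or.inl (spos_of_one hz h1)
    · right
      rw [sneg_iff_spos_not]
      apply spos_of_one
      · rw [zcount_eq_zero_iff]
        intro k hk1 hk2
        rw [posAt_map_not]
        simp only [List.length_map] at hk2
        have := zcount_eq_zero_iff.1 hz k hk1 hk2
        omega
      · rw [posAt_map_not, h1]
        norm_num
  · intro h
    rw [zcount_eq_zero_iff]
    intro k h1 h2
    rcases h with h | h
    · have := h k h1 h2; omega
    · have := h k h1 h2; omega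

lemma choose_two_mul (n : ℕ) (hn : 1 ≤ n) :
    Nat.choose (2*n) n = 2 * Nat.choose (2*n-1) n := by
  have e2 : Nat.choose (2*n-1) (n-1) = Nat.choose (2*n-1) n := by
    rw [show n - 1 = (2*n-1) - n by omega, Nat.choose_symm (by omega)]
  calc Nat.choose (2*n) n = Nat.choose ((2*n-1)+1) ((n-1)+1) := by
        rw [show (2*n-1)+1 = 2*n by omega, show (n-1)+1 = n by omega]
    _ = Nat.choose (2*n-1) (n-1) + Nat.choose (2*n-1) ((n-1)+1) := Nat.choose_succ_succ _ _
    _ = 2 * Nat.choose (2*n-1) n := by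
        rw [show (n-1)+1 = n by omega, e2]
        ring

/-- `A₀(2n) = C(2n, n)`. -/
lemma card_nozero (n : ℕ) (hn : 1 ≤ n) :
    ((allB (2*n)).filter fun l => zcount l = 0).card = Nat.choose (2*n) n := by
  have e : ((allB (2*n)).filter fun l => zcount l = 0)
      = ((allB (2*n)).filter spos) ∪ ((allB (2*n)).filter sneg) := by
    ext l
    simp only [Finset.mem_filter, Finset.mem_union, mem_allB]
    constructor
    · rintro ⟨hlen, hz⟩
      rcases (nozero_iff (by rw [hlen]; omega)).1 hz with h | h
      · exact Or.inl ⟨hlen, h⟩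
      · exact Or.inr ⟨hlen, h⟩
    · rintro (⟨hlen, h⟩ | ⟨hlen, h⟩)
      · exact ⟨hlen, (nozero_iff (by rw [hlen]; omega)).2 (Or.inl h)⟩
      · exact ⟨hlen, (nozero_iff (by rw [hlen]; omega)).2 (Or.inr h)⟩
  rw [e, Finset.card_union_of_disjoint, card_spos n hn, card_sneg n hn, choose_two_mul n hn]
  · ring
  · simp only [Finset.disjoint_left, Finset.mem_filter, mem_allB]
    rintro l ⟨hlen, hsp⟩ ⟨-, hsn⟩
    have h1 := hsp 1 le_rfl (by omega)
    have h2 := hsn 1 le_rfl (by omega)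
    omega

end SSRW10

namespace SSRW10

def firstRet (l : List Bool) : Prop :=
  ssum l = 0 ∧ ∀ k, 1 ≤ k → k < l.length → posAt l k ≠ 0

noncomputable def fz (l : List Bool) : ℕ := sInf {k | 1 ≤ k ∧ posAt l k = 0}

/-- first-zero property at time `t` -/
def fzAt (t : ℕ) (l : List Bool) : Prop :=
  1 ≤ t ∧ posAt l t = 0 ∧ ∀ k, 1 ≤ k → k < t → posAt l k ≠ 0

lemma fz_spec {l : List Bool} (h : 0 < zcount l) :
    fzAt (fz l) l ∧ fz l ≤ l.length := by
  obtain ⟨k, hk1, hk2, hk3⟩ := zcount_pos_iff.1 h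
  have hne : {k | 1 ≤ k ∧ posAt l k = 0}.Nonempty := ⟨k, hk1, hk3⟩
  have h1 : 1 ≤ fz l ∧ posAt l (fz l) = 0 := Nat.sInf_mem hne
  have h2 : fz l ≤ k := Nat.sInf_le ⟨hk1, hk3⟩
  refine ⟨⟨h1.1, h1.2, fun j hj1 hj2 hj0 => ?_⟩, le_trans h2 hk2⟩
  have : fz l ≤ j := Nat.sInf_le ⟨hj1, hj0⟩
  omega

lemma fzAt_unique {l : List Bool} {t t' : ℕ} (h : fzAt t l) (h' : fzAt t' l) : t = t' := by
  by_contra hne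
  rcases Nat.lt_or_ge t t' with hlt | hge
  · exact h'.2.2 t h.1 hlt h.2.1
  · exact h.2.2 t' h'.1 (by omega) h'.2.1

lemma fz_eq_of_fzAt {l : List Bool} {t : ℕ} (h : fzAt t l) (ht : t ≤ l.length) : fz l = t := by
  have hz : 0 < zcount l := zcount_pos_iff.2 ⟨t, h.1, ht, h.2.1⟩
  exact fzAt_unique (fz_spec hz).1 h

lemma posAt_drop {l : List Bool} {t : ℕ} (hz : posAt l t = 0) (k : ℕ) :
    posAt (l.drop t) k = posAt l (t + k) := by
  rcases Nat.le_total t l.length with ht | ht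
  · have hlen : (l.take t).length = t := by simp [ht]
    have e := posAt_append_add (l.take t) (l.drop t) k
    rw [List.take_append_drop, hlen] at e
    have hz' : ssum (l.take t) = 0 := hz
    rw [hz', zero_add] at e
    exact e.symm
  · rw [List.drop_of_length_le ht]
    have h1 : posAt ([] : List Bool) k = 0 := by simp [posAt]
    have h2 : posAt l (t + k) = ssum l := posAt_of_length_le l (by omega)
    have h3 : ssum l = 0 := by
      have := posAt_of_length_le l ht
      rw [hz] at this
      exact this.symm
    rw [h1, h2, h3]

lemma zcount_decomp {l : List Bool} {t : ℕ} (h : fzAt t l) (ht : t ≤ l.length) :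
    zcount l = 1 + zcount (l.drop t) := by
  have hsplit : Finset.Icc 1 l.length = Finset.Icc 1 t ∪ Finset.Icc (t+1) l.length := by
    ext k
    simp only [Finset.mem_union, Finset.mem_Icc]
    omega
  have hdisj : Disjoint (Finset.Icc 1 t) (Finset.Icc (t+1) l.length) := by
    simp only [Finset.disjoint_left, Finset.mem_Icc]
    intro k h1 h2
    omega
  rw [zcount, hsplit, Finset.filter_union, Finset.card_union_of_disjoint
    (Finset.disjoint_filter_filter hdisj)]
  congr 1
  · have : (Finset.Icc 1 t).filter (fun k => posAt l k = 0) = {t} := by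
      ext k
      simp only [Finset.mem_filter, Finset.mem_Icc, Finset.mem_singleton]
      constructor
      · rintro ⟨⟨h1, h2⟩, h3⟩
        by_contra hne
        exact h.2.2 k h1 (by omega) h3
      · rintro rfl
        exact ⟨⟨h.1, le_rfl⟩, h.2.1⟩
    rw [this, Finset.card_singleton]
  · rw [zcount]
    apply Finset.card_nbij' (fun k => k - t) (fun k => k + t)
    · intro k hk
      simp only [Finset.mem_coe, Finset.mem_filter, Finset.mem_Icc, List.length_drop] at hk ⊢
      refine ⟨⟨by omega, by omega⟩, ?_⟩
      rw [posAt_drop h.2.1, show t + (k - t) = k by omega]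
      exact hk.2
    · intro k hk
      simp only [Finset.mem_coe, Finset.mem_filter, Finset.mem_Icc, List.length_drop] at hk ⊢
      refine ⟨⟨by omega, by omega⟩, ?_⟩
      rw [show k + t = t + k by omega, ← posAt_drop h.2.1]
      exact hk.2
    · intro k hk
      simp only [Finset.mem_coe, Finset.mem_filter, Finset.mem_Icc] at hk ⊢
      omega
    · intro k hk
      simp only [Finset.mem_coe, Finset.mem_filter, Finset.mem_Icc, List.length_drop] at hk ⊢
      omega

lemma ssum_decomp {l : List Bool} {t : ℕ} (h : posAt l t = 0) (ht : t ≤ l.length) :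
    ssum l = ssum (l.drop t) := by
  have := posAt_drop h (l.length - t)
  rw [show t + (l.length - t) = l.length by omega, posAt_length] at this
  rw [← this, posAt_of_length_le _ (by simp)]

/-- Master decomposition at the first zero. -/
lemma master (L : ℕ) (R : List Bool → Prop) [DecidablePred R] :
    ((allB L).filter fun l => 0 < zcount l ∧ R (l.drop (fz l))).card
      = ∑ t ∈ Finset.Icc 1 L,
          ((allB t).filter firstRet).card * ((allB (L-t)).filter R).card := by
  have hunion : ((allB L).filter fun l => 0 < zcount l ∧ R (l.drop (fz l)))
      = (Finset.Icc 1 L).biUnion fun t =>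
          (allB L).filter fun l => fzAt t l ∧ R (l.drop t) := by
    ext l
    simp only [Finset.mem_biUnion, Finset.mem_filter, Finset.mem_Icc, mem_allB]
    constructor
    · rintro ⟨hlen, hz, hR⟩
      obtain ⟨hfz, hle⟩ := fz_spec hz
      exact ⟨fz l, ⟨hfz.1, by omega⟩, hlen, hfz, hR⟩
    · rintro ⟨t, ⟨ht1, ht2⟩, hlen, hfz, hR⟩
      have hz : 0 < zcount l := zcount_pos_iff.2 ⟨t, hfz.1, by omega, hfz.2.1⟩
      have : fz l = t := fz_eq_of_fzAt hfz (by omega)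
      exact ⟨hlen, hz, by rw [this]; exact hR⟩
  rw [hunion, Finset.card_biUnion]
  · apply Finset.sum_congr rfl
    intro t ht
    simp only [Finset.mem_Icc] at ht
    have e : ((allB L).filter fun l => fzAt t l ∧ R (l.drop t))
        = ((allB L).filter fun l => firstRet (l.take t) ∧ R (l.drop t)) := by
      apply Finset.filter_congr
      intro l hl
      have hlen := mem_allB.1 hl
      have hlent : (l.take t).length = t := by simp [hlen]; omega
      have hpos : ∀ k, k ≤ t → posAt (l.take t) k = posAt l k := by
        intro k hk
        simp only [posAt, List.take_take, min_eq_left hk]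
      constructor
      · rintro ⟨⟨h1, h2, h3⟩, hR⟩
        refine ⟨⟨h2, fun k hk1 hk2 => ?_⟩, hR⟩
        rw [hlent] at hk2
        rw [hpos k (by omega)]
        exact h3 k hk1 hk2
      · rintro ⟨⟨h1, h2⟩, hR⟩
        refine ⟨⟨by omega, h1, fun k hk1 hk2 => ?_⟩, hR⟩
        rw [← hpos k (by omega)]
        exact h2 k hk1 (by rw [hlent]; omega)
    rw [e, card_filter_split L t ht.2]
  · intro a ha b hb hab
    simp only [Finset.disjoint_left, Finset.mem_filter]
    rintro l ⟨-, hfa, -⟩ ⟨-, hfb, -⟩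
    exact hab (fzAt_unique hfa hfb)

end SSRW10

namespace SSRW10

noncomputable def Ac (L j : ℕ) : ℕ := ((allB L).filter fun l => zcount l = j).card
noncomputable def Zc (L : ℕ) : ℕ := ((allB L).filter fun l => ssum l = 0).card
noncomputable def FRc (t : ℕ) : ℕ := ((allB t).filter firstRet).card

lemma FRc_odd {t : ℕ} (h : ¬ (2 ∣ t)) : FRc t = 0 := by
  rw [FRc, Finset.card_eq_zero, Finset.filter_eq_empty_iff]
  intro l hl hfr
  have hlen := mem_allB.1 hl
  exact ssum_ne_zero_of_odd l (by rw [hlen]; exact h) hfr.1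

lemma Ac_succ (L j : ℕ) :
    Ac L (j+1) = ∑ t ∈ Finset.Icc 1 L, FRc t * Ac (L-t) j := by
  rw [Ac]
  have e : ((allB L).filter fun l => zcount l = j + 1)
      = ((allB L).filter fun l => 0 < zcount l ∧ zcount (l.drop (fz l)) = j) := by
    apply Finset.filter_congr
    intro l _
    constructor
    · intro hz
      have hpos : 0 < zcount l := by omega
      obtain ⟨hfz, hle⟩ := fz_spec hpos
      have := zcount_decomp hfz hle
      exact ⟨hpos, by omega⟩
    · rintro ⟨hpos, hj⟩
      obtain ⟨hfz, hle⟩ := fz_spec hpos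
      have := zcount_decomp hfz hle
      omega
  rw [e]
  exact master L (fun b => zcount b = j)

lemma Zc_succ (L : ℕ) (hL : 1 ≤ L) :
    Zc L = ∑ t ∈ Finset.Icc 1 L, FRc t * Zc (L-t) := by
  rw [Zc]
  have e : ((allB L).filter fun l => ssum l = 0)
      = ((allB L).filter fun l => 0 < zcount l ∧ ssum (l.drop (fz l)) = 0) := by
    apply Finset.filter_congr
    intro l hl
    have hlen := mem_allB.1 hl
    constructor
    · intro hs
      have hpos : 0 < zcount l := zcount_pos_iff.2
        ⟨l.length, by omega, le_rfl, by rw [posAt_length]; exact hs⟩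
      obtain ⟨hfz, hle⟩ := fz_spec hpos
      exact ⟨hpos, by rw [← ssum_decomp hfz.2.1 hle]; exact hs⟩
    · rintro ⟨hpos, hs⟩
      obtain ⟨hfz, hle⟩ := fz_spec hpos
      rw [ssum_decomp hfz.2.1 hle]
      exact hs
  rw [e]
  exact master L (fun b => ssum b = 0)

lemma Zc_two_mul (n : ℕ) : Zc (2*n) = Nat.choose (2*n) n := by
  rw [Zc]
  have e : ((allB (2*n)).filter fun l => ssum l = 0)
      = ((allB (2*n)).filter fun l => l.count true = n) := by
    apply Finset.filter_congr
    intro l hl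
    rw [count_eq_iff_ssum (mem_allB.1 hl)]
    constructor <;> intro h <;> rw [h] <;> push_cast <;> ring
  rw [e, card_count_true]

lemma zcount_nil : zcount ([] : List Bool) = 0 := by
  simp [zcount]

lemma Ac_le_Zc : ∀ j n, Ac (2*n) j ≤ Zc (2*n) := by
  intro j
  induction j with
  | zero =>
    intro n
    rcases Nat.eq_zero_or_pos n with rfl | hn
    · have h1 : Ac (2*0) 0 = 1 := by
        rw [Ac, mul_zero, show allB 0 = {[]} from rfl, Finset.filter_singleton,
          if_pos zcount_nil, Finset.card_singleton]
      have h2 : Zc (2*0) = 1 := by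
        rw [Zc, mul_zero, show allB 0 = {[]} from rfl, Finset.filter_singleton,
          if_pos ssum_nil, Finset.card_singleton]
      omega
    · rw [Zc_two_mul]
      exact le_of_eq (card_nozero n hn)
  | succ j ih =>
    intro n
    rcases Nat.eq_zero_or_pos n with rfl | hn
    · have h0 : Ac (2*0) (j+1) = 0 := by
        rw [Ac, Finset.card_eq_zero, Finset.filter_eq_empty_iff]
        intro l hl
        rw [mul_zero] at hl
        rw [show allB 0 = {[]} from rfl, Finset.mem_singleton] at hl
        subst hl
        simp [zcount_nil]
      rw [h0]
      exact Nat.zero_le _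
    · rw [show Ac (2*n) (j+1) = _ from Ac_succ (2*n) j, Zc_succ (2*n) (by omega)]
      apply Finset.sum_le_sum
      intro t ht
      simp only [Finset.mem_Icc] at ht
      by_cases hpar : 2 ∣ t
      · obtain ⟨m, rfl⟩ := hpar
        have e : 2*n - 2*m = 2*(n-m) := by omega
        rw [e]
        exact Nat.mul_le_mul_left _ (ih (n - m))
      · rw [FRc_odd hpar]
        simp

lemma card_zcount_lt (n N : ℕ) :
    ((allB (2*n)).filter fun l => zcount l < N).card ≤ N * Nat.choose (2*n) n := by
  rw [Finset.card_eq_sum_card_fiberwise (f := fun l => zcount l) (t := Finset.range N)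
    (fun l hl => by simp only [Finset.mem_coe, Finset.mem_filter] at hl; simpa using hl.2)]
  calc ∑ j ∈ Finset.range N,
        (((allB (2*n)).filter fun l => zcount l < N).filter fun l => zcount l = j).card
      ≤ ∑ j ∈ Finset.range N, Ac (2*n) j := by
        apply Finset.sum_le_sum
        intro j _
        apply Finset.card_le_card
        intro l hl
        simp only [Finset.mem_filter] at hl ⊢
        exact ⟨hl.1.1, hl.2⟩
    _ ≤ ∑ j ∈ Finset.range N, Zc (2*n) := Finset.sum_le_sum fun j _ => Ac_le_Zc j n
    _ = N * Nat.choose (2*n) n := by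
        rw [Finset.sum_const, Finset.card_range, smul_eq_mul, Zc_two_mul]

end SSRW10

namespace SSRW10

lemma binom_sqrt_bound : ∀ n : ℕ, 1 ≤ n →
    (Nat.centralBinom n : ℝ) * Real.sqrt (2*n+2) ≤ 4^n := by
  intro n
  induction n with
  | zero => omega
  | succ n ih =>
    intro _
    rcases Nat.eq_zero_or_pos n with rfl | hn
    · have : Nat.centralBinom 1 = 2 := by decide
      rw [this]
      have h4 : ((2:ℝ)*(1:ℕ)+2) = 4 := by norm_num
      rw [h4, show (4:ℝ) = 2^2 by norm_num, Real.sqrt_sq (by norm_num)]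
      norm_num
    · push_cast
      have key : (2*(n:ℝ)+1) * Real.sqrt (2*((n:ℝ)+1)+2) ≤ (2*(n:ℝ)+2) * Real.sqrt (2*(n:ℝ)+2) := by
        have h1 : (2*(n:ℝ)+1) * Real.sqrt (2*((n:ℝ)+1)+2)
            = Real.sqrt ((2*(n:ℝ)+1)^2 * (2*((n:ℝ)+1)+2)) := by
          rw [Real.sqrt_mul (by positivity), Real.sqrt_sq (by positivity)]
        have h2 : (2*(n:ℝ)+2) * Real.sqrt (2*(n:ℝ)+2)
            = Real.sqrt ((2*(n:ℝ)+2)^2 * (2*(n:ℝ)+2)) := by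
          rw [Real.sqrt_mul (by positivity), Real.sqrt_sq (by positivity)]
        rw [h1, h2]
        apply Real.sqrt_le_sqrt
        nlinarith [sq_nonneg ((n:ℝ))]
      have hrec : ((n:ℝ)+1) * (Nat.centralBinom (n+1) : ℝ)
          = 2 * (2*(n:ℝ)+1) * (Nat.centralBinom n : ℝ) := by
        have h := congrArg (fun m : ℕ => (m : ℝ)) (Nat.succ_mul_centralBinom_succ n)
        push_cast at h
        linarith
      have hCB : (Nat.centralBinom (n+1) : ℝ)
          = 2 * (2*(n:ℝ)+1) * (Nat.centralBinom n : ℝ) / ((n:ℝ)+1) := by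
        field_simp
        linarith [hrec]
      have hIH := ih hn
      have hpos : (0:ℝ) < (n:ℝ)+1 := by positivity
      calc (Nat.centralBinom (n+1) : ℝ) * Real.sqrt (2*((n:ℝ)+1)+2)
          = (2 * (Nat.centralBinom n : ℝ) / ((n:ℝ)+1))
              * ((2*(n:ℝ)+1) * Real.sqrt (2*((n:ℝ)+1)+2)) := by
            rw [hCB]; ring
        _ ≤ (2 * (Nat.centralBinom n : ℝ) / ((n:ℝ)+1))
              * ((2*(n:ℝ)+2) * Real.sqrt (2*(n:ℝ)+2)) := by
            apply mul_le_mul_of_nonneg_left key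
            positivity
        _ = 4 * ((Nat.centralBinom n : ℝ) * Real.sqrt (2*(n:ℝ)+2)) := by
            field_simp
            ring
        _ ≤ 4 * 4^n := by linarith [hIH]
        _ = 4^(n+1) := by ring

/-- Final real-number bound. -/
lemma count_bound_real (n N : ℕ) (hn : 1 ≤ n) :
    ((((allB (2*n)).filter fun l => zcount l < N).card : ℝ)) * (1/2)^(2*n)
      ≤ (N : ℝ) / Real.sqrt (2*(n:ℝ)+2) := by
  have hs : 0 < Real.sqrt (2*(n:ℝ)+2) := Real.sqrt_pos.2 (by positivity)
  rw [le_div_iff₀ hs]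
  have h1 : ((((allB (2*n)).filter fun l => zcount l < N).card : ℝ))
      ≤ (N : ℝ) * Nat.centralBinom n := by
    have := card_zcount_lt n N
    rw [← Nat.centralBinom] at this
    exact_mod_cast this
  have h2 : (Nat.centralBinom n : ℝ) * Real.sqrt (2*(n:ℝ)+2) ≤ 4^n := binom_sqrt_bound n hn
  have h3 : ((1:ℝ)/2)^(2*n) * 4^n = 1 := by
    rw [pow_mul, ← mul_pow]
    norm_num
  have hc : (0:ℝ) ≤ (((allB (2*n)).filter fun l => zcount l < N).card : ℝ) := by positivity
  calc (((allB (2*n)).filter fun l => zcount l < N).card : ℝ) * (1/2)^(2*n)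
        * Real.sqrt (2*(n:ℝ)+2)
      = ((((allB (2*n)).filter fun l => zcount l < N).card : ℝ) * Real.sqrt (2*(n:ℝ)+2))
          * (1/2)^(2*n) := by ring
    _ ≤ ((N : ℝ) * Nat.centralBinom n * Real.sqrt (2*(n:ℝ)+2)) * (1/2)^(2*n) := by
        apply mul_le_mul_of_nonneg_right _ (by positivity)
        exact mul_le_mul_of_nonneg_right h1 hs.le
    _ = (N : ℝ) * ((Nat.centralBinom n : ℝ) * Real.sqrt (2*(n:ℝ)+2)) * (1/2)^(2*n) := by ring
    _ ≤ (N : ℝ) * 4^n * (1/2)^(2*n) := by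
        apply mul_le_mul_of_nonneg_right _ (by positivity)
        exact mul_le_mul_of_nonneg_left h2 (by positivity)
    _ = (N : ℝ) * ((1/2)^(2*n) * 4^n) := by ring
    _ = (N : ℝ) := by rw [h3, mul_one]

end SSRW10

open MeasureTheory ProbabilityTheory

namespace SSRW10
variable {Ω : Type*}

noncomputable def lst (X : ℕ → Ω → ℤ) (m : ℕ) (ω : Ω) : List Bool :=
  (List.range m).map (fun i => decide (X (i+1) ω = 1))

lemma lst_length (X : ℕ → Ω → ℤ) (m : ℕ) (ω : Ω) : (lst X m ω).length = m := by simp [lst]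

lemma stepZ_decide {X : ℕ → Ω → ℤ} {ω : Ω} {i : ℕ} (h : X i ω = 1 ∨ X i ω = -1) :
    stepZ (decide (X i ω = 1)) = X i ω := by
  rcases h with h | h
  · simp [h, stepZ]
  · rw [h]
    have : ¬ (X i ω = 1) := by rw [h]; norm_num
    simp [this, stepZ, h]

lemma posAt_lst (X : ℕ → Ω → ℤ) (m : ℕ) (ω : Ω)
    (hgood : ∀ i, 1 ≤ i → i ≤ m → (X i ω = 1 ∨ X i ω = -1)) :
    ∀ k, k ≤ m → posAt (lst X m ω) k = walk X k ω := by
  intro k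
  induction k with
  | zero => intro _; simp [walk]
  | succ k ih =>
    intro hk
    have hklen : k < (lst X m ω).length := by rw [lst_length]; omega
    rw [posAt_succ_sub _ k hklen, ih (by omega)]
    have hget : (lst X m ω).get ⟨k, hklen⟩ = decide (X (k+1) ω = 1) := by
      simp [lst]
    rw [hget, stepZ_decide (hgood (k+1) (by omega) hk)]
    rw [walk, walk, Finset.sum_range_succ]

lemma zcount_lst (X : ℕ → Ω → ℤ) (m : ℕ) (ω : Ω)
    (hgood : ∀ i, 1 ≤ i → i ≤ m → (X i ω = 1 ∨ X i ω = -1)) :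
    zcount (lst X m ω) = localTime X 0 m ω := by
  rw [zcount, localTime, lst_length]
  congr 1
  apply Finset.filter_congr
  intro k hk
  rw [Finset.mem_Icc] at hk
  rw [posAt_lst X m ω hgood k hk.2]

lemma localTime'_zero (X : ℕ → Ω → ℤ) (c : ℤ) (ω : Ω) : localTime X c 0 ω = 0 := by
  simp [localTime]

lemma localTime'_succ_le (X : ℕ → Ω → ℤ) (c : ℤ) (k : ℕ) (ω : Ω) :
    localTime X c (k+1) ω ≤ localTime X c k ω + 1 := by
  rw [localTime, localTime]
  have : Finset.Icc 1 (k+1) = insert (k+1) (Finset.Icc 1 k) := by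
    ext j
    simp only [Finset.mem_Icc, Finset.mem_insert]
    omega
  rw [this, Finset.filter_insert]
  split
  · exact le_trans (Finset.card_insert_le _ _) (by omega)
  · omega

end SSRW10

namespace SSRW10

lemma lst_getD {Ω : Type*} (X : ℕ → Ω → ℤ) (m : ℕ) (ω : Ω) {k : ℕ} (hk : k < m) :
    (lst X m ω).getD k true = decide (X (k+1) ω = 1) := by
  rw [lst, List.getD_eq_getElem?_getD, List.getElem?_map, List.getElem?_range hk]
  rfl

theorem statement10' {Ω : Type*} [MeasurableSpace Ω] (P : Measure Ω) [IsProbabilityMeasure P]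
    (X : ℕ → Ω → ℤ)
    (hmeas : ∀ i, Measurable (X i))
    (hindep : iIndepFun X P)
    (hhalf : ∀ i, P {ω | X i ω = 1} = 1 / 2 ∧ P {ω | X i ω = -1} = 1 / 2)
    (N : ℕ) (hN : 1 ≤ N) (n : ℕ) (hn : 1 ≤ n) :
    P {ω | 2 * n < rho X N ω}
      ≤ ENNReal.ofReal ((N : ℝ) / Real.sqrt (2 * (n : ℝ) + 2)) := by
  set m := 2 * n with hm
  set G : Set Ω := {ω | ∀ i, 1 ≤ i → i ≤ m → (X i ω = 1 ∨ X i ω = -1)} with hG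
  -- each step is ±1 a.s.
  have hXmeas : ∀ (i : ℕ) (c : ℤ), MeasurableSet {ω | X i ω = c} := by
    intro i c
    have : {ω | X i ω = c} = X i ⁻¹' {c} := by
      ext ω
      simp
    rw [this]
    exact hmeas i (measurableSet_singleton c)
  have hGc : P Gᶜ = 0 := by
    have hsub : Gᶜ ⊆ ⋃ i ∈ Finset.Icc 1 m, ({ω | X i ω = 1 ∨ X i ω = -1})ᶜ := by
      intro ω hω
      have hω' : ¬ (∀ i, 1 ≤ i → i ≤ m → (X i ω = 1 ∨ X i ω = -1)) := hω
      push_neg at hω'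
      obtain ⟨i, h1, h2, h3, h4⟩ := hω'
      refine Set.mem_biUnion (Finset.mem_Icc.2 ⟨h1, h2⟩) ?_
      simp only [Set.mem_compl_iff, Set.mem_setOf_eq]
      tauto
    have hzero : ∀ i ∈ Finset.Icc 1 m, P (({ω | X i ω = 1 ∨ X i ω = -1})ᶜ) = 0 := by
      intro i _
      have hu : {ω | X i ω = 1 ∨ X i ω = -1} = {ω | X i ω = 1} ∪ {ω | X i ω = -1} := by
        ext ω
        simp [Set.mem_union]
      have hmeasu : MeasurableSet {ω | X i ω = 1 ∨ X i ω = -1} := by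
        rw [hu]
        exact (hXmeas i 1).union (hXmeas i (-1))
      rw [prob_compl_eq_zero_iff hmeasu, hu, measure_union ?_ (hXmeas i (-1)),
        (hhalf i).1, (hhalf i).2]
      · exact ENNReal.add_halves 1
      · rw [Set.disjoint_left]
        intro ω hω1 hω2
        simp only [Set.mem_setOf_eq] at hω1 hω2
        rw [hω1] at hω2
        norm_num at hω2
    have hle : P (⋃ i ∈ Finset.Icc 1 m, ({ω | X i ω = 1 ∨ X i ω = -1})ᶜ)
        ≤ ∑ i ∈ Finset.Icc 1 m, P (({ω | X i ω = 1 ∨ X i ω = -1})ᶜ) :=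
      measure_biUnion_finset_le _ _
    rw [Finset.sum_eq_zero hzero] at hle
    exact measure_mono_null hsub (le_antisymm hle zero_le)
  -- the good finset and cylinders
  set Egood : Finset (List Bool) := (allB m).filter (fun l => zcount l < N) with hEgood
  set C : List Bool → Set Ω :=
    fun l => ⋂ i ∈ Finset.Icc 1 m, {ω | X i ω = stepZ (l.getD (i-1) true)} with hC
  have hincl : {ω | 2 * n < rho X N ω} ∩ G ⊆ ⋃ l ∈ Egood, C l := by
    rintro ω ⟨hρ, hGω⟩
    simp only [Set.mem_setOf_eq] at hρ
    have hgood : ∀ i, 1 ≤ i → i ≤ m → (X i ω = 1 ∨ X i ω = -1) := hGω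
    -- local time below N
    have hne : ∀ k, k ≤ m → localTime X 0 k ω ≠ N := by
      intro k hk hmem
      have h1 : rho X N ω ≤ k := Nat.sInf_le hmem
      omega
    have hind : ∀ k, k ≤ m → localTime X 0 k ω < N := by
      intro k
      induction k with
      | zero => intro _; rw [localTime'_zero]; omega
      | succ k ih =>
        intro hk
        have h1 := localTime'_succ_le X 0 k ω
        have h2 := ih (by omega)
        have h3 := hne (k+1) hk
        omega
    have hlt : localTime X 0 m ω < N := hind m le_rfl
    have hlmem : lst X m ω ∈ Egood := by
      rw [hEgood, Finset.mem_filter, mem_allB]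
      exact ⟨lst_length X m ω, by rw [zcount_lst X m ω hgood]; exact hlt⟩
    refine Set.mem_biUnion hlmem ?_
    · simp only [hC, Set.mem_iInter]
      intro i hi
      rw [Finset.mem_Icc] at hi
      have hk : i - 1 < m := by omega
      rw [Set.mem_setOf_eq, lst_getD X m ω hk, show i - 1 + 1 = i by omega,
        stepZ_decide (hgood i hi.1 hi.2)]
  -- measure of cylinders
  have hCmeas : ∀ l : List Bool, P (C l) = (1/2 : ℝ≥0∞) ^ m := by
    intro l
    have hms : ∀ i ∈ Finset.Icc 1 m,
        MeasurableSet[MeasurableSpace.comap (X i) inferInstance]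
          {ω | X i ω = stepZ (l.getD (i-1) true)} := by
      intro i _
      refine ⟨{stepZ (l.getD (i-1) true)}, measurableSet_singleton _, ?_⟩
      ext ω
      simp
    rw [hC, hindep.meas_biInter hms]
    have e : ∀ i ∈ Finset.Icc 1 m, P {ω | X i ω = stepZ (l.getD (i-1) true)} = 1/2 := by
      intro i _
      rcases stepZ_cases (l.getD (i-1) true) with h | h <;> rw [h]
      · exact (hhalf i).1
      · exact (hhalf i).2
    rw [Finset.prod_congr rfl e, Finset.prod_const, Nat.card_Icc]
    norm_num
  -- assemble
  have hsplit : P {ω | 2 * n < rho X N ω}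
      ≤ P ({ω | 2 * n < rho X N ω} ∩ G) + P Gᶜ := by
    have hsub : {ω | 2 * n < rho X N ω} ⊆ ({ω | 2 * n < rho X N ω} ∩ G) ∪ Gᶜ := by
      intro ω hω
      by_cases hGω : ω ∈ G
      · exact Or.inl ⟨hω, hGω⟩
      · exact Or.inr hGω
    exact le_trans (measure_mono hsub) (measure_union_le _ _)
  have hmain : P ({ω | 2 * n < rho X N ω} ∩ G) ≤ (Egood.card : ℝ≥0∞) * (1/2)^m := by
    calc P ({ω | 2 * n < rho X N ω} ∩ G) ≤ P (⋃ l ∈ Egood, C l) := measure_mono hincl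
      _ ≤ ∑ l ∈ Egood, P (C l) := measure_biUnion_finset_le _ _
      _ = ∑ l ∈ Egood, (1/2 : ℝ≥0∞)^m := Finset.sum_congr rfl (fun l _ => hCmeas l)
      _ = (Egood.card : ℝ≥0∞) * (1/2)^m := by rw [Finset.sum_const, nsmul_eq_mul]
  have hconv : (Egood.card : ℝ≥0∞) * (1/2)^m
      ≤ ENNReal.ofReal ((N : ℝ) / Real.sqrt (2 * (n : ℝ) + 2)) := by
    have h12 : (1/2 : ℝ≥0∞) = ENNReal.ofReal ((1:ℝ)/2) := by
      rw [ENNReal.ofReal_div_of_pos (by norm_num)]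
      norm_num
    rw [h12, ← ENNReal.ofReal_pow (by norm_num), ← ENNReal.ofReal_natCast Egood.card,
      ← ENNReal.ofReal_mul (by positivity)]
    apply ENNReal.ofReal_le_ofReal
    have := count_bound_real n N hn
    rw [← hm] at this
    exact this
  calc P {ω | 2 * n < rho X N ω} ≤ P ({ω | 2 * n < rho X N ω} ∩ G) + P Gᶜ := hsplit
    _ = P ({ω | 2 * n < rho X N ω} ∩ G) := by rw [hGc, add_zero]
    _ ≤ (Egood.card : ℝ≥0∞) * (1/2)^m := hmain
    _ ≤ ENNReal.ofReal ((N : ℝ) / Real.sqrt (2 * (n : ℝ) + 2)) := hconv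

end SSRW10

/-- For all integers `N ≥ 1` and `n ≥ 1`, `P(ρ_N > 2n) ≤ N/(2n+2)^{1/2}`. -/
theorem statement10 (P : Measure Ω) [IsProbabilityMeasure P] (X : ℕ → Ω → ℤ)
    (hX : IsSSRW P X) (N : ℕ) (hN : 1 ≤ N) (n : ℕ) (hn : 1 ≤ n) :
    P {ω | 2 * n < rho X N ω}
      ≤ ENNReal.ofReal ((N : ℝ) / Real.sqrt (2 * (n : ℝ) + 2)) := by
  obtain ⟨hmeas, hindep, hhalf⟩ := hX
  exact SSRW10.statement10' P X hmeas hindep hhalf N hN n hn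
end

section
/- Let Y_1, Y_2, ... be i.i.d. random variables with the exponential distribution of parameter 1. Then for every integer n ≥ 1 and every real u with 0 < u < 2√n, P( max_{1≤j≤n} |Σ_{i=1}^j (Y_i − 1)| ≥ u√n ) ≤ 2 exp( −u²/8 ). -/
open MeasureTheory ProbabilityTheory Filter
open scoped ENNReal

variable {Ω : Type*} [MeasurableSpace Ω]

namespace Statement12Aux

open Real Set
open scoped NNReal

lemma expMeasure_eq : expMeasure 1 = (volume : Measure ℝ).withDensity
    (fun x => ((exponentialPDFReal 1 x).toNNReal : ℝ≥0∞)) := rfl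

lemma integral_expMeasure (f : ℝ → ℝ) :
    ∫ y, f y ∂(expMeasure 1) = ∫ y in Ici 0, Real.exp (-y) * f y := by
  rw [expMeasure_eq, integral_withDensity_eq_integral_smul
    (measurable_exponentialPDFReal 1).real_toNNReal f]
  rw [← integral_indicator measurableSet_Ici]
  congr 1
  ext x
  rcases le_or_gt 0 x with hx | hx
  · simp [indicator, hx, exponentialPDFReal, gammaPDFReal, NNReal.smul_def,
      Real.toNNReal_of_nonneg (by positivity : (0:ℝ) ≤ Real.exp (-x)), smul_eq_mul]
  · simp [indicator, hx.not_ge, exponentialPDFReal, gammaPDFReal, not_le.2 hx, NNReal.smul_def]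

lemma integral_exp_mul_expMeasure {t : ℝ} (ht : t < 1) :
    ∫ y, Real.exp (t * y) ∂(expMeasure 1) = (1 - t)⁻¹ := by
  have hb : 0 < 1 - t := by linarith
  rw [integral_expMeasure]
  have heq : ∀ y : ℝ, Real.exp (-y) * Real.exp (t * y) = Real.exp (-(1 - t) * y) := by
    intro y; rw [← Real.exp_add]; ring_nf
  rw [integral_Ici_eq_integral_Ioi]
  simp_rw [heq]
  have hd : ∀ x ∈ Ici (0:ℝ), HasDerivAt (fun y => -Real.exp (-(1 - t) * y) / (1 - t))
      (Real.exp (-(1 - t) * x)) x := by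
    intro x _
    have h1 := (((hasDerivAt_id x).const_mul (-(1 - t))).exp).neg.div_const (1 - t)
    refine h1.congr_deriv ?_
    rw [div_eq_iff hb.ne']
    simp only [id]
    ring
  have htend : Tendsto (fun y => -Real.exp (-(1 - t) * y) / (1 - t)) atTop (nhds (-0 / (1 - t))) := by
    refine Tendsto.div_const (Tendsto.neg ?_) _
    exact Real.tendsto_exp_atBot.comp (tendsto_id.const_mul_atTop_of_neg (by linarith))
  have := integral_Ioi_of_hasDerivAt_of_tendsto' hd (exp_neg_integrableOn_Ioi 0 hb) htend
  rw [this]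
  simp [hb.ne']
  field_simp

lemma integrable_exp_mul_expMeasure {t : ℝ} (ht : t < 1) :
    Integrable (fun y => Real.exp (t * y)) (expMeasure 1) := by
  have hb : 0 < 1 - t := by linarith
  rw [expMeasure_eq, integrable_withDensity_iff
    ((measurable_exponentialPDFReal 1).real_toNNReal.coe_nnreal_ennreal)
    (Filter.Eventually.of_forall fun x => ENNReal.coe_lt_top)]
  have : Integrable ((Ici (0:ℝ)).indicator (fun x => Real.exp (-(1 - t) * x))) volume := by
    refine IntegrableOn.integrable_indicator ?_ measurableSet_Ici
    rw [integrableOn_Ici_iff_integrableOn_Ioi]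
    exact exp_neg_integrableOn_Ioi 0 hb
  refine this.congr (Filter.Eventually.of_forall fun x => ?_)
  rcases le_or_gt 0 x with hx | hx
  · simp [indicator, hx, exponentialPDFReal, gammaPDFReal,
      Real.toNNReal_of_nonneg (by positivity : (0:ℝ) ≤ Real.exp (-x)), ← Real.exp_add]
    ring_nf
  · simp [indicator, hx.not_ge, exponentialPDFReal, gammaPDFReal, not_le.2 hx]

variable {Ω : Type*} [MeasurableSpace Ω]

lemma one_sided (P : Measure Ω) [IsProbabilityMeasure P] (Y : ℕ → Ω → ℝ)
    (hmeas : ∀ i, Measurable (Y i))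
    (hindep : iIndepFun Y P)
    (hdist : ∀ i, Measure.map (Y i) P = expMeasure 1)
    (n : ℕ) (t a : ℝ) (ht : |t| ≤ 1/2) :
    P {ω | ∃ j, 1 ≤ j ∧ j ≤ n ∧ a ≤ t * ∑ i ∈ Finset.Icc 1 j, (Y i ω - 1)}
      ≤ ENNReal.ofReal (Real.exp (2 * n * t^2 - a)) := by
  have ht1 : t < 1 := lt_of_le_of_lt (le_trans (le_abs_self t) ht) (by norm_num)
  have ht1' : 0 < 1 - t := by linarith
  have ht2 : t ≤ 1/2 := le_trans (le_abs_self t) ht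
  -- the per-variable factor and its expectation
  set M : ℝ := Real.exp (-t) * (1 - t)⁻¹ with hMdef
  have hM0 : 0 < M := by positivity
  have hM1 : 1 ≤ M := by
    rw [hMdef, ← div_eq_mul_inv, le_div_iff₀ ht1']
    have := Real.add_one_le_exp (-t)
    linarith
  have hM2 : M ≤ Real.exp (2 * t^2) := by
    rw [hMdef, ← div_eq_mul_inv, div_le_iff₀ ht1']
    rw [show (2:ℝ) * t^2 = (t + 2*t^2) + -t by ring, Real.exp_add, mul_comm (Real.exp _),
      mul_assoc]
    have h1 : 1 + (t + 2*t^2) ≤ Real.exp (t + 2*t^2) := by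
      have := Real.add_one_le_exp (t + 2*t^2); linarith
    have h2 : (1 + (t + 2*t^2)) * (1 - t) ≤ Real.exp (t + 2*t^2) * (1 - t) := by
      exact mul_le_mul_of_nonneg_right h1 ht1'.le
    have h3 : 1 ≤ (1 + (t + 2*t^2)) * (1 - t) := by nlinarith [sq_nonneg t]
    calc Real.exp (-t) = Real.exp (-t) * 1 := by ring
    _ ≤ Real.exp (-t) * ((Real.exp (t + 2*t^2) * (1 - t))) := by
        exact mul_le_mul_of_nonneg_left (le_trans h3 h2) (Real.exp_pos _).le
    _ = Real.exp (-t) * (Real.exp (t + 2*t^2) * (1 - t)) := rfl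
  set g : ℕ → Ω → ℝ := fun i ω => Real.exp (t * (Y i ω - 1)) with hgdef
  have hgeq : ∀ i, g i = fun ω => Real.exp (-t) * Real.exp (t * Y i ω) := by
    intro i; ext ω; rw [hgdef, ← Real.exp_add]; ring_nf
  have hm1 : Measurable fun y : ℝ => Real.exp (t * y) := (measurable_id.const_mul t).exp
  have hgint : ∀ i, Integrable (g i) P := by
    intro i
    rw [hgeq]
    refine Integrable.const_mul ?_ _
    have : Integrable (fun y => Real.exp (t * y)) (Measure.map (Y i) P) := by
      rw [hdist i]; exact integrable_exp_mul_expMeasure ht1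
    rwa [integrable_map_measure (hm1.aestronglyMeasurable) (hmeas i).aemeasurable] at this
  have hgExp : ∀ i, ∫ ω, g i ω ∂P = M := by
    intro i
    rw [hgeq]
    rw [integral_const_mul]
    have : ∫ ω, Real.exp (t * Y i ω) ∂P = ∫ y, Real.exp (t * y) ∂(Measure.map (Y i) P) := by
      rw [integral_map (hmeas i).aemeasurable (hm1.aestronglyMeasurable)]
    rw [this, hdist i, integral_exp_mul_expMeasure ht1]
  -- partial sums and the exponential process
  set S : ℕ → Ω → ℝ := fun j ω => ∑ i ∈ Finset.Icc 1 j, (Y i ω - 1) with hSdef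
  set f : ℕ → Ω → ℝ := fun j ω => Real.exp (t * S j ω) with hfdef
  have hf_succ : ∀ j, f (j+1) = fun ω => f j ω * g (j+1) ω := by
    intro j; ext ω
    simp only [hfdef, hSdef, hgdef]
    rw [Finset.sum_Icc_succ_top (by omega : 1 ≤ j+1), mul_add, Real.exp_add]
  -- the natural filtration
  set 𝒢 : Filtration ℕ ‹MeasurableSpace Ω› :=
    ⟨fun j => ⨆ i ∈ Set.Icc 1 j, MeasurableSpace.comap (Y i) inferInstance,
     fun j k hjk => biSup_mono (Set.Icc_subset_Icc_right hjk),
     fun j => iSup_le fun i => iSup_le fun _ => (hmeas i).comap_le⟩ with h𝒢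
  have hYmeas𝒢 : ∀ j i, i ∈ Finset.Icc 1 j → Measurable[𝒢 j] (Y i) := by
    intro j i hi
    have hle : MeasurableSpace.comap (Y i) inferInstance ≤ 𝒢 j := by
      refine le_biSup (fun i => MeasurableSpace.comap (Y i) inferInstance) ?_
      simpa using hi
    exact (comap_measurable (Y i)).mono hle le_rfl
  have hSmeas : ∀ j, Measurable[𝒢 j] (S j) := by
    intro j
    apply Finset.measurable_sum
    intro i hi
    exact (hYmeas𝒢 j i hi).sub measurable_const
  have hfmeas : ∀ j, Measurable[𝒢 j] (f j) := fun j => ((hSmeas j).const_mul t).exp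
  -- independence of the past and the next step
  have hIndep : ∀ j, Indep (𝒢 j) (MeasurableSpace.comap (Y (j+1)) inferInstance) P := by
    intro j
    have hd : Disjoint (Set.Icc 1 j) ({j+1} : Set ℕ) := by
      simp [Set.disjoint_singleton_right]
    have h := indep_iSup_of_disjoint (fun i => (hmeas i).comap_le) hindep.iIndep hd
    simp only [iSup_singleton] at h
    exact h
  have hIndepFun : ∀ j (h : Ω → ℝ), Measurable[𝒢 j] h → IndepFun h (g (j+1)) P := by
    intro j h hh
    have hg' : Measurable[MeasurableSpace.comap (Y (j+1)) inferInstance] (g (j+1)) :=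
      (((comap_measurable (Y (j+1))).sub measurable_const).const_mul t).exp
    exact indep_of_indep_of_le_right (indep_of_indep_of_le_left (hIndep j) hh.comap_le)
      hg'.comap_le
  -- integrability and expectation of the exponential process
  have hkey : ∀ j, Integrable (f j) P ∧ ∫ ω, f j ω ∂P = M ^ j := by
    intro j
    induction j with
    | zero =>
      have h0 : f 0 = fun _ => 1 := by
        ext ω; simp [hfdef, hSdef]
      rw [h0]
      refine ⟨integrable_const 1, by simp⟩
    | succ j ih =>
      have hIF := hIndepFun j (f j) (hfmeas j)
      rw [hf_succ j]
      have h5 : ∫ ω, f j ω * g (j+1) ω ∂P = (∫ ω, f j ω ∂P) * ∫ ω, g (j+1) ω ∂P :=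
        IndepFun.integral_mul_eq_mul_integral hIF ih.1.aestronglyMeasurable (hgint _).aestronglyMeasurable
      exact ⟨IndepFun.integrable_mul hIF ih.1 (hgint _),
        by rw [h5, ih.2, hgExp, pow_succ]⟩
  -- submartingale property
  have hadp : StronglyAdapted 𝒢 f := fun j => (hfmeas j).stronglyMeasurable
  have hsub : Submartingale f 𝒢 P := by
    refine submartingale_of_setIntegral_le_succ hadp (fun j => (hkey j).1) ?_
    intro j s hs
    have hsamb : MeasurableSet s := 𝒢.le j s hs
    have hind_meas : Measurable[𝒢 j] (s.indicator (f j)) := (hfmeas j).indicator hs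
    have hIF := hIndepFun j _ hind_meas
    have hint_ind : Integrable (s.indicator (f j)) P := (hkey j).1.indicator hsamb
    have e1 : ∫ ω in s, f (j+1) ω ∂P = (∫ ω in s, f j ω ∂P) * M := by
      rw [← integral_indicator hsamb]
      have heq : s.indicator (f (j+1)) = fun ω => s.indicator (f j) ω * g (j+1) ω := by
        ext ω
        rw [hf_succ j]
        by_cases hω : ω ∈ s <;> simp [Set.indicator, hω]
      have h5 : ∫ ω, s.indicator (f j) ω * g (j+1) ω ∂P
          = (∫ ω, s.indicator (f j) ω ∂P) * ∫ ω, g (j+1) ω ∂P :=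
        IndepFun.integral_mul_eq_mul_integral hIF hint_ind.aestronglyMeasurable (hgint _).aestronglyMeasurable
      rw [heq, h5, integral_indicator hsamb, hgExp]
    rw [e1]
    have hnn : 0 ≤ ∫ ω in s, f j ω ∂P :=
      setIntegral_nonneg hsamb (fun ω _ => (Real.exp_pos _).le)
    nlinarith
  -- Doob's maximal inequality
  set ε : ℝ≥0 := (Real.exp a).toNNReal with hε
  have hnonneg : (0 : ℕ → Ω → ℝ) ≤ f := by
    intro j ω; exact (Real.exp_pos _).le
  have hmax := maximal_ineq hsub hnonneg (ε := ε) n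
  have hsubset : {ω | ∃ j, 1 ≤ j ∧ j ≤ n ∧ a ≤ t * S j ω} ⊆
      {ω | (ε : ℝ) ≤ (Finset.range (n+1)).sup' Finset.nonempty_range_add_one fun k => f k ω} := by
    rintro ω ⟨j, hj1, hjn, hja⟩
    simp only [Set.mem_setOf_eq]
    refine le_trans ?_
      (Finset.le_sup' (fun k => f k ω) (Finset.mem_range.2 (Nat.lt_succ_of_le hjn)))
    rw [hε, Real.coe_toNNReal _ (Real.exp_pos a).le]
    exact Real.exp_le_exp.2 hja
  have hε0 : (ε : ℝ≥0∞) ≠ 0 := by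
    simp only [ne_eq, ENNReal.coe_eq_zero, hε, Real.toNNReal_eq_zero, not_le]
    exact Real.exp_pos a
  have h2 : ENNReal.ofReal (∫ ω in
      {ω | (ε : ℝ) ≤ (Finset.range (n+1)).sup' Finset.nonempty_range_add_one fun k => f k ω},
      f n ω ∂P) ≤ ENNReal.ofReal (M ^ n) := by
    refine ENNReal.ofReal_le_ofReal ?_
    rw [← (hkey n).2]
    exact setIntegral_le_integral (hkey n).1
      (Filter.Eventually.of_forall fun ω => (Real.exp_pos _).le)
  have hchain : P {ω | ∃ j, 1 ≤ j ∧ j ≤ n ∧ a ≤ t * S j ω} ≤ ENNReal.ofReal (M ^ n) / ε := by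
    rw [ENNReal.le_div_iff_mul_le (Or.inl hε0) (Or.inl ENNReal.coe_ne_top)]
    calc P {ω | ∃ j, 1 ≤ j ∧ j ≤ n ∧ a ≤ t * S j ω} * ε
        ≤ P {ω | (ε : ℝ) ≤ (Finset.range (n+1)).sup' Finset.nonempty_range_add_one fun k => f k ω}
          * ε := mul_le_mul_left (measure_mono hsubset) _
      _ = ε • P {ω | (ε : ℝ) ≤ (Finset.range (n+1)).sup' Finset.nonempty_range_add_one
          fun k => f k ω} := by rw [ENNReal.smul_def, smul_eq_mul, mul_comm]
      _ ≤ _ := le_trans hmax h2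
  refine le_trans hchain ?_
  have hcoe : (ε : ℝ≥0∞) = ENNReal.ofReal (Real.exp a) := rfl
  rw [hcoe, ← ENNReal.ofReal_div_of_pos (Real.exp_pos a)]
  refine ENNReal.ofReal_le_ofReal ?_
  rw [div_le_iff₀ (Real.exp_pos a), ← Real.exp_add]
  have hMn : M ^ n ≤ Real.exp (2 * t^2) ^ n := pow_le_pow_left₀ hM0.le hM2 n
  calc M ^ n ≤ Real.exp (2 * t^2) ^ n := hMn
    _ = Real.exp (n * (2 * t^2)) := (Real.exp_nat_mul _ n).symm
    _ = Real.exp (2 * n * t^2 - a + a) := by ring_nf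


end Statement12Aux

/-- If `Y 1, Y 2, …` are i.i.d. exponential(1) random variables, then for every integer `n ≥ 1`
and real `0 < u < 2√n`,
`P(max_{1≤j≤n} |Σ_{i=1}^j (Y_i − 1)| ≥ u √n) ≤ 2 exp(−u²/8)`. -/
theorem statement12 (P : Measure Ω) [IsProbabilityMeasure P] (Y : ℕ → Ω → ℝ)
    (hmeas : ∀ i, Measurable (Y i))
    (hindep : iIndepFun Y P)
    (hdist : ∀ i, Measure.map (Y i) P = expMeasure 1)
    (n : ℕ) (hn : 1 ≤ n) (u : ℝ) (hu0 : 0 < u) (hu : u < 2 * Real.sqrt n) :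
    P {ω | ∃ j, 1 ≤ j ∧ j ≤ n ∧
        u * Real.sqrt n ≤ |∑ i ∈ Finset.Icc 1 j, (Y i ω - 1)|}
      ≤ ENNReal.ofReal (2 * Real.exp (-(u ^ 2) / 8)) := by
  have hn0 : (0:ℝ) < n := by exact_mod_cast hn
  have hs0 : 0 < Real.sqrt n := Real.sqrt_pos.2 hn0
  set s : ℝ := Real.sqrt n with hsdef
  have hns : (n:ℝ) = s^2 := (Real.sq_sqrt hn0.le).symm
  set lam : ℝ := u / (4 * s) with hlamdef
  have hlam0 : 0 < lam := by positivity
  have hlam : lam ≤ 1/2 := by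
    rw [hlamdef, div_le_iff₀ (by positivity)]
    nlinarith
  have habs1 : |lam| ≤ 1/2 := by rwa [abs_of_pos hlam0]
  have habs2 : |(-lam)| ≤ 1/2 := by rwa [abs_neg, abs_of_pos hlam0]
  have ha : 2 * n * lam^2 - lam * (u * s) = -(u^2)/8 := by
    rw [hns, hlamdef]
    field_simp
    ring
  have h1 := Statement12Aux.one_sided P Y hmeas hindep hdist n lam (lam * (u * s)) habs1
  have h2 := Statement12Aux.one_sided P Y hmeas hindep hdist n (-lam) (lam * (u * s)) habs2
  rw [ha] at h1
  rw [show 2 * (n:ℝ) * (-lam)^2 - lam * (u * s) = -(u^2)/8 by rw [neg_sq]; exact ha] at h2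
  have hsubset : {ω | ∃ j, 1 ≤ j ∧ j ≤ n ∧ u * s ≤ |∑ i ∈ Finset.Icc 1 j, (Y i ω - 1)|} ⊆
      {ω | ∃ j, 1 ≤ j ∧ j ≤ n ∧ lam * (u * s) ≤ lam * ∑ i ∈ Finset.Icc 1 j, (Y i ω - 1)} ∪
      {ω | ∃ j, 1 ≤ j ∧ j ≤ n ∧ lam * (u * s) ≤ -lam * ∑ i ∈ Finset.Icc 1 j, (Y i ω - 1)} := by
    rintro ω ⟨j, hj1, hjn, hja⟩
    rcases le_abs.1 hja with h | h
    · exact Or.inl ⟨j, hj1, hjn, mul_le_mul_of_nonneg_left h hlam0.le⟩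
    · refine Or.inr ⟨j, hj1, hjn, ?_⟩
      rw [neg_mul]
      have := mul_le_mul_of_nonneg_left h hlam0.le
      linarith
  calc P {ω | ∃ j, 1 ≤ j ∧ j ≤ n ∧ u * s ≤ |∑ i ∈ Finset.Icc 1 j, (Y i ω - 1)|}
      ≤ P ({ω | ∃ j, 1 ≤ j ∧ j ≤ n ∧ lam * (u * s) ≤ lam * ∑ i ∈ Finset.Icc 1 j, (Y i ω - 1)} ∪
        {ω | ∃ j, 1 ≤ j ∧ j ≤ n ∧ lam * (u * s) ≤ -lam * ∑ i ∈ Finset.Icc 1 j, (Y i ω - 1)}) :=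
      measure_mono hsubset
    _ ≤ P {ω | ∃ j, 1 ≤ j ∧ j ≤ n ∧ lam * (u * s) ≤ lam * ∑ i ∈ Finset.Icc 1 j, (Y i ω - 1)} +
        P {ω | ∃ j, 1 ≤ j ∧ j ≤ n ∧ lam * (u * s) ≤ -lam * ∑ i ∈ Finset.Icc 1 j, (Y i ω - 1)} :=
      measure_union_le _ _
    _ ≤ ENNReal.ofReal (Real.exp (-(u^2)/8)) + ENNReal.ofReal (Real.exp (-(u^2)/8)) :=
      add_le_add h1 h2
    _ = ENNReal.ofReal (2 * Real.exp (-(u ^ 2) / 8)) := by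
      rw [← ENNReal.ofReal_add (Real.exp_pos _).le (Real.exp_pos _).le]
      ring_nf
end

section
/- Let S and S^{(1)} be two simple symmetric random walks defined on a common probability space (not necessarily independent), with local times ξ, ξ^{(1)} and return times to zero ρ_j, ρ_j^{(1)} respectively. Then almost surely, for every integer N ≥ 1 and every integer n with 1 ≤ n ≤ ρ_N^{(1)}: max_{1≤i≤n} |ξ(0,i) − ξ^{(1)}(0,i)| ≤ max_{1≤j≤N} |ξ(0,ρ_j) − ξ(0,ρ_j^{(1)})| + 1. -/
open MeasureTheory ProbabilityTheory Filter
open scoped Classical ENNReal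

variable {Ω : Type*} [MeasurableSpace Ω]

section Det

variable {X Y : ℕ → Ω → ℤ} {ω : Ω} {k : ℤ}

lemma localTime_zero : localTime X k 0 ω = 0 := by
  simp [localTime]

lemma localTime_succ (n : ℕ) :
    localTime X k (n + 1) ω
      = localTime X k n ω + (if walk X (n + 1) ω = k then 1 else 0) := by
  unfold localTime
  rw [show Finset.Icc 1 (n + 1) = insert (n + 1) (Finset.Icc 1 n) by
    ext x; simp only [Finset.mem_Icc, Finset.mem_insert]; omega]
  rw [Finset.filter_insert]
  split_ifs with h
  · rw [Finset.card_insert_of_notMem (by simp)]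
  · simp

lemma localTime_mono : Monotone (fun n => localTime X k n ω) := by
  intro a b hab
  exact Finset.card_le_card (Finset.filter_subset_filter _ (Finset.Icc_subset_Icc_right hab))

lemma exists_localTime_eq {j m : ℕ} (h : j ≤ localTime X k m ω) :
    ∃ m' ≤ m, localTime X k m' ω = j := by
  induction m with
  | zero =>
    refine ⟨0, le_rfl, ?_⟩
    have h0 : localTime X k 0 ω = 0 := localTime_zero
    omega
  | succ n ih =>
    rcases le_or_gt j (localTime X k n ω) with h' | h'
    · obtain ⟨m', hm', hh⟩ := ih h'
      exact ⟨m', hm'.trans (Nat.le_succ n), hh⟩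
    · refine ⟨n + 1, le_rfl, le_antisymm ?_ h⟩
      have := localTime_succ (X := X) (k := k) (ω := ω) n
      split_ifs at this <;> omega

lemma localTime_rho {j : ℕ} (h : ∃ m, localTime X 0 m ω = j) :
    localTime X 0 (rho X j ω) ω = j :=
  Nat.sInf_mem h

lemma rho_le {j m : ℕ} (h : localTime X 0 m ω = j) : rho X j ω ≤ m :=
  Nat.sInf_le h

end Det

section Sup

lemma finsetSup_le {f : ℕ → ℝ} {s : Finset ℕ} {c : ℝ} (hc : 0 ≤ c)
    (h : ∀ i ∈ s, f i ≤ c) : (⨆ i ∈ s, f i) ≤ c := by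
  refine ciSup_le fun i => ?_
  by_cases hi : i ∈ s
  · have : Nonempty (i ∈ s) := ⟨hi⟩
    simpa [ciSup_const] using h i hi
  · have : IsEmpty (i ∈ s) := ⟨hi⟩
    simpa [Real.iSup_of_isEmpty] using hc

lemma le_finsetSup {f : ℕ → ℝ} {s : Finset ℕ} {j : ℕ} (hj : j ∈ s) :
    f j ≤ ⨆ i ∈ s, f i := by
  set c : ℝ := ∑ i ∈ s, |f i| with hc
  have hc0 : 0 ≤ c := Finset.sum_nonneg fun i _ => abs_nonneg _
  have hbdd : BddAbove (Set.range fun i => ⨆ _ : i ∈ s, f i) := by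
    refine ⟨c, ?_⟩
    rintro x ⟨i, rfl⟩
    by_cases hi : i ∈ s
    · have : Nonempty (i ∈ s) := ⟨hi⟩
      simp only [ciSup_const]
      exact ((le_abs_self _).trans
        (Finset.single_le_sum (fun i _ => abs_nonneg (f i)) hi))
    · have : IsEmpty (i ∈ s) := ⟨hi⟩
      simpa [Real.iSup_of_isEmpty] using hc0
  have h1 : f j ≤ ⨆ _ : j ∈ s, f j := by
    have : Nonempty (j ∈ s) := ⟨hj⟩
    simp [ciSup_const]
  exact h1.trans (le_ciSup hbdd j)

end Sup

/-- Main deterministic lemma. -/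
lemma key_det {X X1 : ℕ → Ω → ℤ} {ω : Ω}
    (hrec : ∀ j, ∃ m, localTime X 0 m ω = j) :
    ∀ N : ℕ, 1 ≤ N → ∀ n : ℕ, 1 ≤ n → n ≤ rho X1 N ω →
      (⨆ i ∈ Finset.Icc 1 n,
          |(localTime X 0 i ω : ℝ) - (localTime X1 0 i ω : ℝ)|)
        ≤ (⨆ j ∈ Finset.Icc 1 N,
            |(localTime X 0 (rho X j ω) ω : ℝ) - (localTime X 0 (rho X1 j ω) ω : ℝ)|)
          + 1 := by
  intro N hN n hn hnN
  set M : ℝ := ⨆ j ∈ Finset.Icc 1 N,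
      |(localTime X 0 (rho X j ω) ω : ℝ) - (localTime X 0 (rho X1 j ω) ω : ℝ)| with hM
  -- the level-N set for X1 is nonempty
  have hne : ∃ m, localTime X1 0 m ω = N := by
    by_contra hempty
    push_neg at hempty
    have h0 : rho X1 N ω = 0 := by
      rw [rho, Nat.sInf_eq_zero]
      right
      ext m; simp [hempty m]
    rw [h0] at hnN
    omega
  have hX1N : localTime X1 0 (rho X1 N ω) ω = N := localTime_rho hne
  -- all levels 1..N attained by X1
  have hlev : ∀ j ≤ N, localTime X1 0 (rho X1 j ω) ω = j := fun j hj => by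
    obtain ⟨m', _, hm'⟩ := exists_localTime_eq (X := X1) (k := (0:ℤ)) (ω := ω)
      (j := j) (m := rho X1 N ω) (by omega)
    exact localTime_rho ⟨m', hm'⟩
  have hXlev : ∀ j, localTime X 0 (rho X j ω) ω = j := fun j => localTime_rho (hrec j)
  have hMnonneg : (0:ℝ) ≤ M := by
    have := le_finsetSup
      (f := fun j => |(localTime X 0 (rho X j ω) ω : ℝ) - (localTime X 0 (rho X1 j ω) ω : ℝ)|)
      (s := Finset.Icc 1 N) (j := N) (by simp [hN])
    exact le_trans (abs_nonneg _) this
  refine finsetSup_le (by linarith) ?_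
  intro i hi
  simp only [Finset.mem_Icc] at hi
  have hin : i ≤ rho X1 N ω := le_trans hi.2 hnN
  set a := localTime X 0 i ω with ha
  set b := localTime X1 0 i ω with hb
  have hbN : b ≤ N := by
    have h5 : localTime X1 0 i ω ≤ localTime X1 0 (rho X1 N ω) ω :=
      localTime_mono (X := X1) (k := (0:ℤ)) (ω := ω) hin
    rw [hX1N] at h5
    exact h5
  have hMj : ∀ j, 1 ≤ j → j ≤ N →
      |(localTime X 0 (rho X j ω) ω : ℝ) - (localTime X 0 (rho X1 j ω) ω : ℝ)| ≤ M := by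
    intro j h1 h2
    rw [hM]
    exact le_finsetSup
      (f := fun j => |(localTime X 0 (rho X j ω) ω : ℝ) - (localTime X 0 (rho X1 j ω) ω : ℝ)|)
      (s := Finset.Icc 1 N) (j := j) (by simp [h1, h2])
  rw [abs_sub_le_iff]
  constructor
  · -- a - b ≤ M + 1
    rcases le_or_gt a b with hab | hab
    · have : (a:ℝ) - b ≤ 0 := by
        have : (a:ℝ) ≤ b := by exact_mod_cast hab
        linarith
      linarith
    · -- a > b
      rcases eq_or_lt_of_le hbN with hbN' | hbN'
      · -- b = N
        have h1 : a ≤ localTime X 0 (rho X1 N ω) ω :=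
          localTime_mono (X := X) (k := (0:ℤ)) (ω := ω) hin
        have h2 := hMj N hN le_rfl
        rw [hXlev N] at h2
        have := neg_abs_le ((N:ℝ) - (localTime X 0 (rho X1 N ω) ω : ℝ))
        have hcast : (a:ℝ) ≤ (localTime X 0 (rho X1 N ω) ω : ℝ) := by exact_mod_cast h1
        rw [abs_sub_comm] at h2
        have h3 : (localTime X 0 (rho X1 N ω) ω : ℝ) - (N:ℝ) ≤ M :=
          (le_abs_self _).trans h2
        have hbcast : (b:ℝ) = (N:ℝ) := by exact_mod_cast hbN'
        linarith
      · -- b + 1 ≤ N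
        have hc1 : 1 ≤ b + 1 := by omega
        have hc2 : b + 1 ≤ N := hbN'
        have hilt : i < rho X1 (b+1) ω := by
          by_contra hcon
          push_neg at hcon
          have h5 : localTime X1 0 (rho X1 (b+1) ω) ω ≤ localTime X1 0 i ω :=
            localTime_mono (X := X1) (k := (0:ℤ)) (ω := ω) hcon
          rw [hlev (b+1) hc2] at h5
          omega
        have h1 : a ≤ localTime X 0 (rho X1 (b+1) ω) ω :=
          localTime_mono (X := X) (k := (0:ℤ)) (ω := ω) (le_of_lt hilt)
        have h2 := hMj (b+1) hc1 hc2
        rw [hXlev (b+1)] at h2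
        rw [abs_sub_comm] at h2
        have h3 : (localTime X 0 (rho X1 (b+1) ω) ω : ℝ) - ((b:ℝ)+1) ≤ M := by
          have := (le_abs_self ((localTime X 0 (rho X1 (b+1) ω) ω : ℝ) - ((b+1:ℕ):ℝ))).trans h2
          push_cast at this ⊢
          linarith
        have hcast : (a:ℝ) ≤ (localTime X 0 (rho X1 (b+1) ω) ω : ℝ) := by exact_mod_cast h1
        linarith
  · -- b - a ≤ M + 1
    rcases le_or_gt b a with hab | hab
    · have : (b:ℝ) ≤ a := by exact_mod_cast hab
      linarith
    · -- b > a, so b ≥ 1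
      have hb1 : 1 ≤ b := by omega
      have hsb : rho X1 b ω ≤ i := rho_le (by
        have : localTime X1 0 i ω = b := rfl
        exact this)
      have h1 : localTime X 0 (rho X1 b ω) ω ≤ a :=
        localTime_mono (X := X) (k := (0:ℤ)) (ω := ω) hsb
      have h2 := hMj b hb1 hbN
      rw [hXlev b] at h2
      have h3 : (b:ℝ) - (localTime X 0 (rho X1 b ω) ω : ℝ) ≤ M :=
        (le_abs_self _).trans h2
      have hcast : (localTime X 0 (rho X1 b ω) ω : ℝ) ≤ (a:ℝ) := by exact_mod_cast h1
      linarith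

section Prob

variable {P : Measure Ω} [IsProbabilityMeasure P] {X Y : ℕ → Ω → ℤ}

lemma marginal_eq (hX : IsSSRW P X) (i : ℕ) (c : ℤ) :
    P (X i ⁻¹' {c}) = if c = 1 ∨ c = -1 then 1 / 2 else 0 := by
  have h1 : P (X i ⁻¹' {1}) = 1 / 2 := hX.2.2 i |>.1
  have h2 : P (X i ⁻¹' {-1}) = 1 / 2 := hX.2.2 i |>.2
  rcases eq_or_ne c 1 with rfl | hc1
  · simp [h1]
  rcases eq_or_ne c (-1) with rfl | hc2
  · simp [h2]
  have hm1 : MeasurableSet (X i ⁻¹' {(1:ℤ)}) := (hX.1 i) (measurableSet_singleton _)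
  have hm2 : MeasurableSet (X i ⁻¹' {(-1:ℤ)}) := (hX.1 i) (measurableSet_singleton _)
  have hdisj : Disjoint (X i ⁻¹' {(1:ℤ)}) (X i ⁻¹' {(-1:ℤ)}) := by
    rw [Set.disjoint_left]
    intro ω hω1 hω2
    simp only [Set.mem_preimage, Set.mem_singleton_iff] at hω1 hω2
    omega
  have hunion : P (X i ⁻¹' {(1:ℤ)} ∪ X i ⁻¹' {(-1:ℤ)}) = 1 := by
    rw [measure_union hdisj hm2, h1, h2]
    rw [ENNReal.div_add_div_same]
    rw [one_add_one_eq_two]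
    exact ENNReal.div_self (two_ne_zero) (ENNReal.ofNat_ne_top)
  have hcompl : P ((X i ⁻¹' {(1:ℤ)} ∪ X i ⁻¹' {(-1:ℤ)})ᶜ) = 0 := by
    rw [measure_compl (hm1.union hm2) (measure_ne_top _ _), hunion, measure_univ]
    simp
  have hsub : X i ⁻¹' {c} ⊆ (X i ⁻¹' {(1:ℤ)} ∪ X i ⁻¹' {(-1:ℤ)})ᶜ := by
    intro ω hω
    simp only [Set.mem_preimage, Set.mem_singleton_iff] at hω
    simp only [Set.mem_compl_iff, Set.mem_union, Set.mem_preimage, Set.mem_singleton_iff]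
    omega
  have : P (X i ⁻¹' {c}) = 0 := le_antisymm ((measure_mono hsub).trans hcompl.le) zero_le
  simp [hc1, hc2, this]

/-- The map to path space. -/
def pathMap (X : ℕ → Ω → ℤ) : Ω → (ℕ → ℤ) := fun ω i => X i ω

lemma measurable_pathMap (hX : ∀ i, Measurable (X i)) : Measurable (pathMap X) :=
  measurable_pi_lambda _ hX

lemma measurableSet_singleton_pi {I : Finset ℕ} (g : (i : I) → ℤ) :
    MeasurableSet {g} := by
  have : ({g} : Set ((i : I) → ℤ)) = ⋂ i : I, (fun f => f i) ⁻¹' {g i} := by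
    ext f
    simp [funext_iff]
  rw [this]
  exact MeasurableSet.iInter fun i =>
    (measurable_pi_apply i) (measurableSet_singleton _)

lemma map_restrict_eq (hX : IsSSRW P X) (hY : IsSSRW P Y) (I : Finset ℕ) :
    P.map (fun ω (i : I) => X i ω) = P.map (fun ω (i : I) => Y i ω) := by
  have hmX : Measurable (fun ω (i : I) => X i ω) :=
    measurable_pi_lambda _ fun i => hX.1 i
  have hmY : Measurable (fun ω (i : I) => Y i ω) :=
    measurable_pi_lambda _ fun i => hY.1 i
  -- singleton values agree
  have hsingle : ∀ (Z : ℕ → Ω → ℤ), IsSSRW P Z → ∀ g : (i : I) → ℤ,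
      P.map (fun ω (i : I) => Z i ω) {g}
        = ∏ i ∈ I, (if (if h : i ∈ I then g ⟨i, h⟩ else 0) = 1 ∨
            (if h : i ∈ I then g ⟨i, h⟩ else 0) = -1 then (1:ℝ≥0∞) / 2 else 0) := by
    intro Z hZ g
    have hmZ : Measurable (fun ω (i : I) => Z i ω) :=
      measurable_pi_lambda _ fun i => hZ.1 i
    rw [Measure.map_apply hmZ (measurableSet_singleton_pi g)]
    have hpre : (fun ω (i : I) => Z i ω) ⁻¹' {g}
        = ⋂ i ∈ I, Z i ⁻¹' {if h : i ∈ I then g ⟨i, h⟩ else 0} := by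
      ext ω
      simp only [Set.mem_preimage, Set.mem_singleton_iff, funext_iff, Set.mem_iInter]
      constructor
      · rintro h i hi
        simp only [Set.mem_preimage, Set.mem_singleton_iff, dif_pos hi]
        exact h ⟨i, hi⟩
      · rintro h ⟨i, hi⟩
        have := h i hi
        simpa only [Set.mem_preimage, Set.mem_singleton_iff, dif_pos hi] using this
    rw [hpre]
    rw [hZ.2.1.measure_inter_preimage_eq_mul I
      (sets := fun i => {if h : i ∈ I then g ⟨i, h⟩ else 0})
      (fun i _ => measurableSet_singleton _)]
    refine Finset.prod_congr rfl fun i hi => ?_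
    rw [marginal_eq hZ]
  refine Measure.ext fun s hs => ?_
  have hcount : s.Countable := Set.Countable.mono (Set.subset_univ s) (Set.countable_univ)
  have hdecomp : s = ⋃ g : s, {(g : (i : I) → ℤ)} := by
    simp [Set.iUnion_of_singleton_coe]
  have hXmeas : ∀ t : Set ((i : I) → ℤ), P.map (fun ω (i : I) => X i ω) t
      = P.map (fun ω (i : I) => Y i ω) t → True := fun _ _ => trivial
  rw [hdecomp]
  have : Countable s := hcount.to_subtype
  rw [measure_iUnion ?_ (fun g => measurableSet_singleton_pi _),
      measure_iUnion ?_ (fun g => measurableSet_singleton_pi _)]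
  · exact tsum_congr fun g => by rw [hsingle X hX, hsingle Y hY]
  · intro g g' hgg'
    simp only [Set.disjoint_singleton]
    exact fun h => hgg' (Subtype.ext h)
  · intro g g' hgg'
    simp only [Set.disjoint_singleton]
    exact fun h => hgg' (Subtype.ext h)

lemma map_pathMap_eq (hX : IsSSRW P X) (hY : IsSSRW P Y) :
    P.map (pathMap X) = P.map (pathMap Y) := by
  have : IsProbabilityMeasure (P.map (pathMap X)) :=
    Measure.isProbabilityMeasure_map (measurable_pathMap hX.1).aemeasurable
  have : IsProbabilityMeasure (P.map (pathMap Y)) :=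
    Measure.isProbabilityMeasure_map (measurable_pathMap hY.1).aemeasurable
  refine ext_of_generate_finite (MeasureTheory.measurableCylinders (fun _ : ℕ => ℤ))
    MeasureTheory.generateFrom_measurableCylinders.symm
    MeasureTheory.isPiSystem_measurableCylinders (fun s hs => ?_) (by simp)
  obtain ⟨I, S, hSm, rfl⟩ := (MeasureTheory.mem_measurableCylinders _).mp hs
  have hcylX : pathMap X ⁻¹' (MeasureTheory.cylinder I S) = (fun ω (i : I) => X i ω) ⁻¹' S := rfl
  have hcylY : pathMap Y ⁻¹' (MeasureTheory.cylinder I S) = (fun ω (i : I) => Y i ω) ⁻¹' S := rfl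
  rw [Measure.map_apply (measurable_pathMap hX.1) hSm.cylinder,
      Measure.map_apply (measurable_pathMap hY.1) hSm.cylinder, hcylX, hcylY]
  calc P ((fun ω (i : I) => X i ω) ⁻¹' S)
      = P.map (fun ω (i : I) => X i ω) S :=
        (Measure.map_apply (f := fun ω (i : I) => X i ω)
          (measurable_pi_lambda _ fun i => hX.1 i) hSm).symm
    _ = P.map (fun ω (i : I) => Y i ω) S := by rw [map_restrict_eq hX hY]
    _ = P ((fun ω (i : I) => Y i ω) ⁻¹' S) :=
        Measure.map_apply (f := fun ω (i : I) => Y i ω)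
          (measurable_pi_lambda _ fun i => hY.1 i) hSm

end Prob

section Tail

variable {P : Measure Ω} [IsProbabilityMeasure P] {X : ℕ → Ω → ℤ}

lemma walk_decomp {ω : Ω} {n l : ℕ} (h : n ≤ l) :
    walk X l ω = walk X n ω + ∑ i ∈ Finset.Ico n l, X (i + 1) ω := by
  rw [walk, walk, Finset.range_eq_Ico, Finset.range_eq_Ico]
  exact (Finset.sum_Ico_consecutive (fun i => X (i + 1) ω) (Nat.zero_le n) h).symm

/-- limsup walk = +∞ event. -/
def EP (X : ℕ → Ω → ℤ) : Set Ω :=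
  {ω | ∀ K : ℕ, ∀ m : ℕ, ∃ l, m ≤ l ∧ (K : ℤ) ≤ walk X l ω}

/-- liminf walk = -∞ event. -/
def EM (X : ℕ → Ω → ℤ) : Set Ω :=
  {ω | ∀ K : ℕ, ∀ m : ℕ, ∃ l, m ≤ l ∧ walk X l ω ≤ -(K : ℤ)}

lemma measurable_walk (hX : ∀ i, Measurable (X i)) (l : ℕ) :
    Measurable (fun ω => walk X l ω) :=
  Finset.measurable_sum _ fun i _ => hX (i + 1)

lemma measurableSet_EP (hX : ∀ i, Measurable (X i)) : MeasurableSet (EP X) := by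
  have hset : EP X = ⋂ K : ℕ, ⋂ m : ℕ, ⋃ l : ℕ, ⋃ _ : m ≤ l,
      (fun ω => walk X l ω) ⁻¹' {x | (K : ℤ) ≤ x} := by
    ext ω; simp [EP]
  rw [hset]
  exact MeasurableSet.iInter fun K => MeasurableSet.iInter fun m =>
    MeasurableSet.iUnion fun l => MeasurableSet.iUnion fun _ =>
      (measurable_walk hX l) trivial

lemma measurableSet_EM (hX : ∀ i, Measurable (X i)) : MeasurableSet (EM X) := by
  have hset : EM X = ⋂ K : ℕ, ⋂ m : ℕ, ⋃ l : ℕ, ⋃ _ : m ≤ l,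
      (fun ω => walk X l ω) ⁻¹' {x | x ≤ -(K : ℤ)} := by
    ext ω; simp [EM]
  rw [hset]
  exact MeasurableSet.iInter fun K => MeasurableSet.iInter fun m =>
    MeasurableSet.iUnion fun l => MeasurableSet.iUnion fun _ =>
      (measurable_walk hX l) trivial

lemma tail_EP (hX : ∀ i, Measurable (X i)) (n : ℕ) :
    MeasurableSet[⨆ i ≥ n, MeasurableSpace.comap (X i) inferInstance] (EP X) := by
  set Mn := ⨆ i ≥ n, MeasurableSpace.comap (X i) inferInstance with hMn
  have hXm : ∀ j, n ≤ j → Measurable[Mn] (X j) := fun j hj =>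
    Measurable.of_comap_le
      (le_iSup₂ (f := fun i (_ : i ≥ n) => MeasurableSpace.comap (X i) inferInstance) j hj)
  have hW : ∀ l, Measurable[Mn] (fun ω => ∑ i ∈ Finset.Ico n l, X (i + 1) ω) := by
    intro l
    refine Finset.measurable_sum _ fun i hi => hXm (i + 1) ?_
    simp only [Finset.mem_Ico] at hi
    omega
  have hset : EP X = ⋂ K : ℕ, ⋂ m : ℕ, ⋃ l : ℕ, ⋃ _ : m ≤ l,
      (fun ω => ∑ i ∈ Finset.Ico n l, X (i + 1) ω) ⁻¹' {x | (K : ℤ) ≤ x} := by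
    ext ω
    simp only [EP, Set.mem_setOf_eq, Set.mem_iInter, Set.mem_iUnion, Set.mem_preimage]
    constructor
    · intro h K m
      obtain ⟨l, hl, hwalk⟩ := h (K + (walk X n ω).natAbs) (max m n)
      refine ⟨l, le_trans (le_max_left m n) hl, ?_⟩
      have hd := walk_decomp (X := X) (ω := ω) (n := n) (l := l)
        (le_trans (le_max_right m n) hl)
      omega
    · intro h K m
      obtain ⟨l, hl, hsum⟩ := h (K + (walk X n ω).natAbs) (max m n)
      refine ⟨l, le_trans (le_max_left m n) hl, ?_⟩
      have hd := walk_decomp (X := X) (ω := ω) (n := n) (l := l)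
        (le_trans (le_max_right m n) hl)
      omega
  rw [hset]
  exact MeasurableSet.iInter fun K => MeasurableSet.iInter fun m =>
    MeasurableSet.iUnion fun l => MeasurableSet.iUnion fun _ =>
      (hW l) trivial

lemma EP_zero_or_one (hX : IsSSRW P X) : P (EP X) = 0 ∨ P (EP X) = 1 := by
  refine ProbabilityTheory.measure_zero_or_one_of_measurableSet_limsup_atTop
    (fun n => (hX.1 n).comap_le) hX.2.1 ?_
  rw [limsup_eq_iInf_iSup_of_nat, MeasurableSpace.measurableSet_iInf]
  intro n
  exact tail_EP hX.1 n

end Tail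

section Blocks

variable {P : Measure Ω} [IsProbabilityMeasure P] {X : ℕ → Ω → ℤ}

lemma blocks (hX : IsSSRW P X) (L : ℕ) (hL : 0 < L) :
    ∀ᵐ ω ∂P, ∀ m₀ : ℕ, ∃ m, m₀ ≤ m ∧ ∀ r < L, X (m * L + r + 1) ω = 1 := by
  classical
  set A : ℕ → Set Ω := fun m => ⋂ r ∈ Finset.range L, X (m * L + r + 1) ⁻¹' {1} with hA
  have hAm : ∀ m, MeasurableSet (A m) := fun m =>
    MeasurableSet.biInter (Finset.range L).countable_toSet
      (fun r _ => (hX.1 _) (measurableSet_singleton _))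
  set J : ℕ → Finset ℕ := fun m => (Finset.range L).image fun r => m * L + r + 1 with hJ
  have hJdisj : ∀ m m', m ≠ m' → Disjoint (J m) (J m') := by
    intro m m' hmm'
    rw [Finset.disjoint_left]
    intro j hj hj'
    simp only [hJ, Finset.mem_image, Finset.mem_range] at hj hj'
    obtain ⟨r, hr, rfl⟩ := hj
    obtain ⟨r', hr', he⟩ := hj'
    rcases Nat.lt_trichotomy m m' with h | h | h
    · have h3 : (m + 1) * L ≤ m' * L := Nat.mul_le_mul_right L h
      have h2 : m * L + L = (m + 1) * L := by ring
      omega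
    · exact hmm' h
    · have h3 : (m' + 1) * L ≤ m * L := Nat.mul_le_mul_right L h
      have h2 : m' * L + L = (m' + 1) * L := by ring
      omega
  have hPs : ∀ s : Finset ℕ, P (⋂ j ∈ s, X j ⁻¹' ({1} : Set ℤ)) = (1 / 2 : ℝ≥0∞) ^ s.card := by
    intro s
    rw [hX.2.1.measure_inter_preimage_eq_mul s (sets := fun _ => ({1} : Set ℤ))
      (fun _ _ => measurableSet_singleton _)]
    rw [Finset.prod_congr rfl (fun i (_ : i ∈ s) =>
      show P (X i ⁻¹' {1}) = 1 / 2 from (hX.2.2 i).1), Finset.prod_const]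
  have hcardJ : ∀ m, (J m).card = L := by
    intro m
    rw [hJ]
    rw [Finset.card_image_of_injective _ (fun a b hab => by omega), Finset.card_range]
  have hAJ : ∀ m, A m = ⋂ j ∈ J m, X j ⁻¹' ({1} : Set ℤ) := by
    intro m
    ext ω
    simp only [hA, hJ, Set.mem_iInter, Finset.mem_range, Finset.mem_image,
      Set.mem_preimage, Set.mem_singleton_iff]
    constructor
    · rintro h j ⟨r, hr, rfl⟩
      exact h r hr
    · intro h r hr
      exact h _ ⟨r, hr, rfl⟩
  have hPAm : ∀ m, P (A m) = (1 / 2 : ℝ≥0∞) ^ L := fun m => by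
    rw [hAJ m, hPs, hcardJ]
  have hindep : iIndepSet A P := by
    rw [ProbabilityTheory.iIndepSet_iff_meas_biInter hAm]
    intro S
    have hbi : (⋂ m ∈ S, A m) = ⋂ j ∈ S.biUnion J, X j ⁻¹' ({1} : Set ℤ) := by
      ext ω
      simp only [Set.mem_iInter, Finset.mem_biUnion]
      constructor
      · rintro h j ⟨m, hm, hj⟩
        have := h m hm
        rw [hAJ m] at this
        simp only [Set.mem_iInter] at this
        exact this j hj
      · intro h m hm
        rw [hAJ m]
        simp only [Set.mem_iInter]
        exact fun j hj => h j ⟨m, hm, hj⟩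
    calc P (⋂ m ∈ S, A m)
        = (1 / 2 : ℝ≥0∞) ^ ((S.biUnion J).card) := by rw [hbi, hPs]
      _ = (1 / 2 : ℝ≥0∞) ^ (∑ m ∈ S, (J m).card) := by
          rw [Finset.card_biUnion (fun m _ m' _ h => hJdisj m m' h)]
      _ = ∏ m ∈ S, (1 / 2 : ℝ≥0∞) ^ ((J m).card) := by
          rw [Finset.prod_pow_eq_pow_sum]
      _ = ∏ m ∈ S, P (A m) := Finset.prod_congr rfl fun m _ => by rw [hPAm, hcardJ]
  have hsum : (∑' m, P (A m)) = ∞ := by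
    rw [tsum_congr hPAm]
    refine ENNReal.tsum_const_eq_top_of_ne_zero (pow_ne_zero _ ?_)
    simp [ENNReal.div_eq_inv_mul]
  have h1 : P (Filter.limsup A atTop) = 1 :=
    ProbabilityTheory.measure_limsup_eq_one hAm hindep hsum
  have hmeas : MeasurableSet (Filter.limsup A atTop) := by
    rw [limsup_eq_iInf_iSup_of_nat]
    exact MeasurableSet.iInter fun n => MeasurableSet.iUnion fun i =>
      MeasurableSet.iUnion fun _ => hAm i
  have h2 : ∀ᵐ ω ∂P, ω ∈ Filter.limsup A atTop := by
    rw [ae_iff]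
    have : {ω | ¬ ω ∈ Filter.limsup A atTop} = (Filter.limsup A atTop)ᶜ := rfl
    rw [this, measure_compl hmeas (measure_ne_top _ _), h1, measure_univ]
    simp
  filter_upwards [h2] with ω hω m₀
  rw [mem_limsup_iff_frequently_mem] at hω
  obtain ⟨m, hm, hmem⟩ := (frequently_atTop.mp hω) m₀
  refine ⟨m, hm, fun r hr => ?_⟩
  rw [hAJ m] at hmem
  simp only [Set.mem_iInter, Set.mem_preimage, Set.mem_singleton_iff] at hmem
  exact hmem _ (by simp only [hJ, Finset.mem_image, Finset.mem_range]; exact ⟨r, hr, rfl⟩)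

end Blocks

section Recurrence

variable {P : Measure Ω} [IsProbabilityMeasure P] {X : ℕ → Ω → ℤ}

lemma ae_mem_of_meas_one {s : Set Ω} (hs : MeasurableSet s) (h : P s = 1) :
    ∀ᵐ ω ∂P, ω ∈ s := by
  rw [ae_iff]
  have he : {ω | ¬ ω ∈ s} = sᶜ := rfl
  rw [he, measure_compl hs (measure_ne_top _ _), h, measure_univ]
  simp

lemma steps_pm (hX : IsSSRW P X) : ∀ᵐ ω ∂P, ∀ i, X i ω = 1 ∨ X i ω = -1 := by
  rw [MeasureTheory.ae_all_iff]
  intro i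
  rw [ae_iff]
  have hm1 : MeasurableSet (X i ⁻¹' {(1:ℤ)}) := (hX.1 i) (measurableSet_singleton _)
  have hm2 : MeasurableSet (X i ⁻¹' {(-1:ℤ)}) := (hX.1 i) (measurableSet_singleton _)
  have hdisj : Disjoint (X i ⁻¹' {(1:ℤ)}) (X i ⁻¹' {(-1:ℤ)}) := by
    rw [Set.disjoint_left]
    intro ω hω1 hω2
    simp only [Set.mem_preimage, Set.mem_singleton_iff] at hω1 hω2
    omega
  have h1 : P (X i ⁻¹' {(1:ℤ)}) = 1 / 2 := (hX.2.2 i).1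
  have h2 : P (X i ⁻¹' {(-1:ℤ)}) = 1 / 2 := (hX.2.2 i).2
  have hunion : P (X i ⁻¹' {(1:ℤ)} ∪ X i ⁻¹' {(-1:ℤ)}) = 1 := by
    rw [measure_union hdisj hm2, h1, h2]
    rw [ENNReal.div_add_div_same, one_add_one_eq_two]
    exact ENNReal.div_self (two_ne_zero) (ENNReal.ofNat_ne_top)
  have he : {ω | ¬(X i ω = 1 ∨ X i ω = -1)}
      = (X i ⁻¹' {(1:ℤ)} ∪ X i ⁻¹' {(-1:ℤ)})ᶜ := by
    ext ω; simp [not_or]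
  rw [he, measure_compl (hm1.union hm2) (measure_ne_top _ _), hunion, measure_univ]
  simp

lemma walk_neg {ω : Ω} (l : ℕ) : walk (fun i ω => -(X i ω)) l ω = - walk X l ω := by
  simp [walk, Finset.sum_neg_distrib]

lemma EM_eq : EM X = EP (fun i ω => -(X i ω)) := by
  ext ω
  simp only [EM, EP, Set.mem_setOf_eq]
  constructor
  · intro h K m
    obtain ⟨l, hl, hw⟩ := h K m
    exact ⟨l, hl, by rw [walk_neg]; omega⟩
  · intro h K m
    obtain ⟨l, hl, hw⟩ := h K m
    rw [walk_neg] at hw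
    exact ⟨l, hl, by omega⟩

lemma IsSSRW_neg (hX : IsSSRW P X) : IsSSRW P (fun i ω => -(X i ω)) := by
  refine ⟨fun i => (hX.1 i).neg, ?_, fun i => ?_⟩
  · exact hX.2.1.comp (fun _ => fun x : ℤ => -x) (fun _ => measurable_neg)
  · constructor
    · have he : {ω | -(X i ω) = 1} = {ω | X i ω = -1} := by
        ext ω
        constructor <;> (intro h; simp only [Set.mem_setOf_eq] at h ⊢; omega)
      rw [he]; exact (hX.2.2 i).2
    · have he : {ω | -(X i ω) = -1} = {ω | X i ω = 1} := by
        ext ω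
        constructor <;> (intro h; simp only [Set.mem_setOf_eq] at h ⊢; omega)
      rw [he]; exact (hX.2.2 i).1

lemma EP_EM_one (hX : IsSSRW P X) : P (EP X) = 1 ∧ P (EM X) = 1 := by
  classical
  have hEPm := measurableSet_EP hX.1
  have hEMm := measurableSet_EM hX.1
  have hneg := IsSSRW_neg hX
  -- the path-space version of EP
  set C : Set (ℕ → ℤ) := {f | ∀ K : ℕ, ∀ m : ℕ, ∃ l, m ≤ l ∧
    (K : ℤ) ≤ ∑ i ∈ Finset.range l, f (i + 1)} with hCdef
  have hC : MeasurableSet C := by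
    have he : C = ⋂ K : ℕ, ⋂ m : ℕ, ⋃ l : ℕ, ⋃ _ : m ≤ l,
        (fun f : ℕ → ℤ => ∑ i ∈ Finset.range l, f (i + 1)) ⁻¹' {x | (K : ℤ) ≤ x} := by
      ext f
      constructor
      · intro hf
        simp only [Set.mem_iInter, Set.mem_iUnion]
        intro K m
        obtain ⟨l, hl, hle⟩ := hf K m
        exact ⟨l, hl, hle⟩
      · intro hf K m
        simp only [Set.mem_iInter, Set.mem_iUnion, Set.mem_preimage, Set.mem_setOf_eq] at hf
        obtain ⟨l, hl, hle⟩ := hf K m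
        exact ⟨l, hl, hle⟩
    rw [he]
    exact MeasurableSet.iInter fun K => MeasurableSet.iInter fun m =>
      MeasurableSet.iUnion fun l => MeasurableSet.iUnion fun _ =>
        (Finset.measurable_sum _ fun i _ => measurable_pi_apply (i + 1)) trivial
  have heq : P (EP X) = P (EM X) := by
    have h1 : EP X = pathMap X ⁻¹' C := rfl
    have h2 : EP (fun i ω => -(X i ω)) = pathMap (fun i ω => -(X i ω)) ⁻¹' C := rfl
    calc P (EP X) = P.map (pathMap X) C :=
          (Measure.map_apply (measurable_pathMap hX.1) hC).symm
      _ = P.map (pathMap (fun i ω => -(X i ω))) C := by rw [map_pathMap_eq hX hneg]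
      _ = P (EP (fun i ω => -(X i ω))) :=
          Measure.map_apply (measurable_pathMap hneg.1) hC
      _ = P (EM X) := by rw [EM_eq]
  have hP1 : P (EP X) = 1 := by
    rcases EP_zero_or_one hX with h0 | h1
    · exfalso
      have hEM0 : P (EM X) = 0 := by rw [← heq]; exact h0
      have hblocks : ∀ᵐ ω ∂P, ∀ L : ℕ, 0 < L →
          ∀ m₀ : ℕ, ∃ m, m₀ ≤ m ∧ ∀ r < L, X (m * L + r + 1) ω = 1 := by
        rw [MeasureTheory.ae_all_iff]
        intro L
        rcases Nat.eq_zero_or_pos L with rfl | hL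
        · exact Filter.Eventually.of_forall (fun ω h => absurd h (lt_irrefl 0))
        · filter_upwards [blocks hX L hL] with ω h _
          exact h
      have hsub : ∀ᵐ ω ∂P, ω ∈ EP X ∪ EM X := by
        filter_upwards [hblocks] with ω hω
        by_contra hcon
        simp only [Set.mem_union, not_or] at hcon
        obtain ⟨hP, hM⟩ := hcon
        simp only [EP, EM, Set.mem_setOf_eq] at hP hM
        push_neg at hP hM
        obtain ⟨K1, m1, hup⟩ := hP
        obtain ⟨K2, m2, hdown⟩ := hM
        -- global bound on |walk|
        set D : ℕ := ((Finset.range (max m1 m2 + 1)).sup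
          fun l => (walk X l ω).natAbs) + K1 + K2 + 1 with hD
        have hbound : ∀ l, (walk X l ω).natAbs ≤ D := by
          intro l
          rcases le_or_gt l (max m1 m2) with hl | hl
          · have hmem : l ∈ Finset.range (max m1 m2 + 1) := Finset.mem_range.mpr (by omega)
            have hle : (walk X l ω).natAbs ≤ (Finset.range (max m1 m2 + 1)).sup
                (fun l => (walk X l ω).natAbs) := Finset.le_sup (f := fun l => (walk X l ω).natAbs) hmem
            omega
          · have hm1l : m1 ≤ l := by omega
            have hm2l : m2 ≤ l := by omega
            have h1 := hup l hm1l
            have h2 := hdown l hm2l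
            omega
        -- an all-ones block of length 2D+1
        obtain ⟨m, -, hblock⟩ := hω (2 * D + 1) (by omega) 0
        set L := 2 * D + 1 with hLdef
        have hdecomp := walk_decomp (X := X) (ω := ω) (n := m * L) (l := m * L + L)
          (by omega)
        have hsum : ∑ i ∈ Finset.Ico (m * L) (m * L + L), X (i + 1) ω = (L : ℤ) := by
          have hone : ∀ i ∈ Finset.Ico (m * L) (m * L + L), X (i + 1) ω = 1 := by
            intro i hi
            simp only [Finset.mem_Ico] at hi
            have hidx : m * L + (i - m * L) + 1 = i + 1 := by omega
            have hb := hblock (i - m * L) (by omega)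
            rw [hidx] at hb
            exact hb
          rw [Finset.sum_congr rfl hone, Finset.sum_const, Nat.card_Ico]
          simp
        have hb1 := hbound (m * L)
        have hb2 := hbound (m * L + L)
        rw [hsum] at hdecomp
        omega
      have hge : (1 : ℝ≥0∞) ≤ P (EP X ∪ EM X) := by
        have := measure_mono_ae (μ := P) (s := (Set.univ : Set Ω)) (t := EP X ∪ EM X)
          (hsub.mono fun ω h _ => h)
        rwa [measure_univ] at this
      have hle : P (EP X ∪ EM X) ≤ P (EP X) + P (EM X) := measure_union_le _ _
      rw [h0, hEM0, add_zero] at hle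
      have hbad : (1 : ℝ≥0∞) ≤ 0 := hge.trans hle
      simp at hbad
    · exact h1
  exact ⟨hP1, by rw [← heq]; exact hP1⟩

lemma ivt {ω : Ω} (hs : ∀ i, X i ω = 1 ∨ X i ω = -1) :
    ∀ d a : ℕ, walk X a ω < 0 → 0 ≤ walk X (a + d) ω →
      ∃ c, a ≤ c ∧ c ≤ a + d ∧ walk X c ω = 0 := by
  intro d
  induction d with
  | zero =>
    intro a h1 h2
    simp only [Nat.add_zero] at h2
    omega
  | succ d ih =>
    intro a h1 h2
    have hstep : walk X (a + 1) ω = walk X a ω + X (a + 1) ω := by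
      rw [walk, walk, Finset.sum_range_succ]
    rcases le_or_gt 0 (walk X (a + 1) ω) with h3 | h3
    · have h4 : walk X (a + 1) ω = 0 := by rcases hs (a + 1) with h5 | h5 <;> omega
      exact ⟨a + 1, by omega, by omega, h4⟩
    · obtain ⟨c, hc1, hc2, hc0⟩ := ih (a + 1) h3
        (by rw [show a + 1 + d = a + (d + 1) by omega]; exact h2)
      exact ⟨c, by omega, by omega, hc0⟩

lemma recurrence (hX : IsSSRW P X) : ∀ᵐ ω ∂P, ∀ j, ∃ m, localTime X 0 m ω = j := by
  obtain ⟨hEP1, hEM1⟩ := EP_EM_one hX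
  filter_upwards [ae_mem_of_meas_one (measurableSet_EP hX.1) hEP1,
    ae_mem_of_meas_one (measurableSet_EM hX.1) hEM1, steps_pm hX] with ω hP hM hs
  have hzero : ∀ m, ∃ l, m < l ∧ walk X l ω = 0 := by
    intro m
    obtain ⟨l1, hl1, hw1⟩ := hM 1 (m + 1)
    obtain ⟨l2, hl2, hw2⟩ := hP 0 l1
    obtain ⟨c, hc1, hc2, hc0⟩ := ivt hs (l2 - l1) l1 (by omega)
      (by rw [show l1 + (l2 - l1) = l2 by omega]; exact hw2)
    exact ⟨c, by omega, hc0⟩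
  have hub : ∀ j, ∃ m, j ≤ localTime X 0 m ω := by
    intro j
    induction j with
    | zero => exact ⟨0, by omega⟩
    | succ j ih =>
      obtain ⟨m, hm⟩ := ih
      obtain ⟨l, hml, hl0⟩ := hzero m
      refine ⟨l, ?_⟩
      have h1 : l - 1 + 1 = l := by omega
      have hstep := localTime_succ (X := X) (k := 0) (ω := ω) (l - 1)
      rw [h1] at hstep
      rw [hstep, if_pos hl0]
      have hmono : localTime X 0 m ω ≤ localTime X 0 (l - 1) ω :=
        localTime_mono (by omega)
      omega
  intro j
  obtain ⟨m, hm⟩ := hub j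
  obtain ⟨m', _, hm'⟩ := exists_localTime_eq hm
  exact ⟨m', hm'⟩

end Recurrence

/-- Let `S` (with steps `X`) and `S⁽¹⁾` (with steps `X1`) be two simple symmetric random walks
on a common probability space, with local times `ξ`, `ξ⁽¹⁾` and return times to zero `ρ`,
`ρ⁽¹⁾`. Then almost surely, for every `N ≥ 1` and every `1 ≤ n ≤ ρ⁽¹⁾_N`,
`max_{1≤i≤n} |ξ(0,i) − ξ⁽¹⁾(0,i)| ≤ max_{1≤j≤N} |ξ(0,ρ_j) − ξ(0,ρ⁽¹⁾_j)| + 1`. -/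
theorem statement16 (P : Measure Ω) [IsProbabilityMeasure P] (X X1 : ℕ → Ω → ℤ)
    (hX : IsSSRW P X) (hX1 : IsSSRW P X1) :
    ∀ᵐ ω ∂P, ∀ N : ℕ, 1 ≤ N → ∀ n : ℕ, 1 ≤ n → n ≤ rho X1 N ω →
      (⨆ i ∈ Finset.Icc 1 n,
          |(localTime X 0 i ω : ℝ) - (localTime X1 0 i ω : ℝ)|)
        ≤ (⨆ j ∈ Finset.Icc 1 N,
            |(localTime X 0 (rho X j ω) ω : ℝ) - (localTime X 0 (rho X1 j ω) ω : ℝ)|)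
          + 1 := by
  filter_upwards [recurrence hX] with ω hrec
  exact key_det hrec
end
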